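/- arXiv:1803.09686 — 4 statements merged into one kernel-verified Lean document; each statement's English description precedes it below -/
import Mathlib

section
/- Let G and H be graphs, and let π : V(G) → V(H) be a weak covering map with tame fibres and the disjoint tree-lifting property. Then there is a choice of integer r ≥ 1 such that for every x ∈ V(G), the set Z = Z(x,r), defined as the connected component of x in π⁻¹(B_r(π(x))) ∩ B_{3r}(x) (endowed with the graph structure induced by G), satisfies: for every vertex u of H at distance exactly r+1 from π(x), the fibre π⁻¹({u}) contains at least two vertices adjacent in G to Z. -/
open MeasureTheory

namespace Percolation

variable {V : Type*} {W : Type*}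

/-- The ball of radius `k` around `x` for the graph distance. -/
def ball (G : SimpleGraph V) (x : V) (k : ℕ) : Set V := {y | G.dist x y ≤ k}

/-- The sphere of radius `k` around `x` for the graph distance. -/
def sphere (G : SimpleGraph V) (x : V) (k : ℕ) : Set V := {y | G.dist x y = k}

/-- A graph is locally finite if every vertex has finitely many neighbours. -/
def LocallyFinite' (G : SimpleGraph V) : Prop := ∀ v : V, (G.neighborSet v).Finite

/-- A graph has bounded degree if there is a uniform finite bound on the number of
neighbours of any vertex. -/
def BoundedDegree (G : SimpleGraph V) : Prop :=
  ∃ D : ℕ, ∀ v : V, (G.neighborSet v).Finite ∧ (G.neighborSet v).ncard ≤ D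

/-- A graph is quasi-transitive if the action of its automorphism group on its vertices
has finitely many orbits. -/
def QuasiTransitive (G : SimpleGraph V) : Prop :=
  ∃ S : Set V, S.Finite ∧ ∀ v : V, ∃ s ∈ S, ∃ φ : G ≃g G, φ s = v

/-- The graph of `ω`-open edges of a percolation configuration `ω` on `G`. -/
def openGraph (G : SimpleGraph V) (ω : G.edgeSet → Bool) : SimpleGraph V where
  Adj x y := ∃ h : G.Adj x y, ω ⟨s(x, y), (SimpleGraph.mem_edgeSet G).mpr h⟩ = true
  symm := by
    constructor
    rintro x y ⟨h, hw⟩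
    refine ⟨h.symm, ?_⟩
    have heq : (⟨s(y, x), (SimpleGraph.mem_edgeSet G).mpr h.symm⟩ : G.edgeSet)
        = ⟨s(x, y), (SimpleGraph.mem_edgeSet G).mpr h⟩ := Subtype.ext (Sym2.eq_swap)
    rw [heq]; exact hw
  loopless := by constructor; rintro x ⟨h, -⟩; exact G.loopless.irrefl x h

/-- The open cluster of the vertex `x` in the configuration `ω`. -/
def cluster (G : SimpleGraph V) (ω : G.edgeSet → Bool) (x : V) : Set V :=
  {y | (openGraph G ω).Reachable x y}

/-- The open cluster of a set `A` of vertices in the configuration `ω`. -/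
def clusterOf (G : SimpleGraph V) (ω : G.edgeSet → Bool) (A : Set V) : Set V :=
  {y | ∃ x ∈ A, (openGraph G ω).Reachable x y}

/-- The event that some open path intersects both `A` and `B`. -/
def connectedEvent (G : SimpleGraph V) (A B : Set V) : Set (G.edgeSet → Bool) :=
  {ω | ∃ a ∈ A, ∃ b ∈ B, (openGraph G ω).Reachable a b}

/-- `μ` is the Bernoulli product measure `⊗_{i ∈ ι} Ber(p)` on `ι → Bool`:
a probability measure giving every finite cylinder event its product probability. -/
def IsBernoulliProduct {ι : Type*} (p : ℝ) (μ : Measure (ι → Bool)) : Prop :=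
  IsProbabilityMeasure μ ∧
    ∀ (t : Finset ι) (f : ι → Bool),
      μ {ω | ∀ i ∈ t, ω i = f i} =
        ∏ i ∈ t, ENNReal.ofReal (if f i then p else 1 - p)

/-- `μ` is the product measure `Ber(p)^{⊗ι} ⊗ Ber(s)^{⊗κ}` on `(ι → Bool) × (κ → Bool)`. -/
def IsBernoulliPair {ι κ : Type*} (p s : ℝ)
    (μ : Measure ((ι → Bool) × (κ → Bool))) : Prop :=
  IsProbabilityMeasure μ ∧
    ∀ (t : Finset ι) (u : Finset κ) (f : ι → Bool) (g : κ → Bool),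
      μ {c | (∀ i ∈ t, c.1 i = f i) ∧ (∀ j ∈ u, c.2 j = g j)} =
        (∏ i ∈ t, ENNReal.ofReal (if f i then p else 1 - p)) *
          ∏ j ∈ u, ENNReal.ofReal (if g j then s else 1 - s)

/-- The critical parameter `p_c` of a graph: the infimum of those `p ∈ [0,1]` for which
Bernoulli(p) bond percolation produces an infinite cluster with positive probability
(with the convention that it equals `1` when no such `p` exists). -/
noncomputable def pc (G : SimpleGraph V) : ℝ :=
  sInf ({p : ℝ | p ∈ Set.Icc (0 : ℝ) 1 ∧
    ∀ μ : Measure (G.edgeSet → Bool), IsBernoulliProduct p μ →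
      0 < μ {ω | ∃ x : V, (cluster G ω x).Infinite}} ∪ {1})

/-- The uniqueness parameter `p_u` of a graph: the infimum of those `p ∈ [0,1]` for which
Bernoulli(p) bond percolation produces exactly one infinite cluster almost surely
(with the convention that it equals `1` when no such `p` exists). -/
noncomputable def pu (G : SimpleGraph V) : ℝ :=
  sInf ({p : ℝ | p ∈ Set.Icc (0 : ℝ) 1 ∧
    ∀ μ : Measure (G.edgeSet → Bool), IsBernoulliProduct p μ →
      μ {ω | ∃! C : (openGraph G ω).ConnectedComponent, C.supp.Infinite} = 1} ∪ {1})

/-- A weak covering map: 1-Lipschitz for the graph distances, and every edge at `π x`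
lifts to an edge at `x`. -/
structure IsWeakCover (G : SimpleGraph V) (H : SimpleGraph W) (π : V → W) : Prop where
  lipschitz : ∀ x y : V, H.dist (π x) (π y) ≤ G.dist x y
  lift : ∀ x : V, ∀ u : W, H.Adj (π x) u → ∃ y : V, G.Adj x y ∧ π y = u

/-- A strong covering map: 1-Lipschitz for the graph distances, and every edge at `π x`
lifts to a *unique* edge at `x`. -/
structure IsStrongCover (G : SimpleGraph V) (H : SimpleGraph W) (π : V → W) : Prop where
  lipschitz : ∀ x y : V, H.dist (π x) (π y) ≤ G.dist x y
  lift : ∀ x : V, ∀ u : W, H.Adj (π x) u → ∃! y : V, G.Adj x y ∧ π y = u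

/-- `π` has tame fibres: for some `R`, every vertex has another vertex of its fibre
within distance `R`. -/
def TameFibres (G : SimpleGraph V) (π : V → W) : Prop :=
  ∃ R : ℕ, ∀ x : V, ∃ y : V, π x = π y ∧ 0 < G.dist x y ∧ G.dist x y ≤ R

/-- `π` has bounded fibres: fibres have uniformly bounded diameter. -/
def BoundedFibres (G : SimpleGraph V) (π : V → W) : Prop :=
  ∃ K : ℕ, ∀ x y : V, π x = π y → G.dist x y ≤ K

/-- `T'` is a lift of the subtree `T` through `π`: a subtree of `G` such that `π` induces
a graph isomorphism from `T'` onto `T`. -/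
def IsLift (G : SimpleGraph V) (H : SimpleGraph W) (π : V → W)
    (T : H.Subgraph) (T' : G.Subgraph) : Prop :=
  T'.coe.IsTree ∧ Set.BijOn π T'.verts T.verts ∧
    ∀ x y : V, x ∈ T'.verts → y ∈ T'.verts → (T'.Adj x y ↔ T.Adj (π x) (π y))

/-- The disjoint tree-lifting property of `π`. -/
def HasDisjointTreeLifting (G : SimpleGraph V) (H : SimpleGraph W) (π : V → W) : Prop :=
  ∀ T : H.Subgraph, T.coe.IsTree →
    ∀ x y : V, x ≠ y → π x = π y → π x ∈ T.verts →
      ∃ Tx Ty : G.Subgraph, IsLift G H π T Tx ∧ IsLift G H π T Ty ∧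
        x ∈ Tx.verts ∧ y ∈ Ty.verts ∧ Disjoint Tx.verts Ty.verts

/-- All edges with both endpoints in the ball `B_r(u)` are `ω`-open. -/
def fullyOpen (H : SimpleGraph V) (r : ℕ) (ω : H.edgeSet → Bool) (u : V) : Prop :=
  ∀ e : H.edgeSet, (∀ z ∈ (e : Sym2 V), H.dist u z ≤ r) → ω e = true

/-- The enhancement step: add all vertices `v` at distance exactly `r+1` from a vertex
`u` of `S` whose `r`-ball is fully open and with `α u = 1`. -/
def enhance (H : SimpleGraph V) (r : ℕ) (ω : H.edgeSet → Bool) (α : V → Bool)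
    (S : Set V) : Set V :=
  S ∪ {v | ∃ u ∈ S, H.dist u v = r + 1 ∧ fullyOpen H r ω u ∧ α u = true}

/-- The sequence `C_n` of the enhanced exploration started from `A`: odd steps spread
along open clusters, even steps perform the enhancement. -/
def enhSeq (H : SimpleGraph V) (r : ℕ) (ω : H.edgeSet → Bool) (α : V → Bool)
    (A : Set V) : ℕ → Set V
  | 0 => A
  | n + 1 =>
      if n % 2 = 0 then clusterOf H ω (enhSeq H r ω α A n)
      else enhance H r ω α (enhSeq H r ω α A n)

/-- The enhanced cluster `C_A(ω, α)`. -/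
def enhCluster (H : SimpleGraph V) (r : ℕ) (ω : H.edgeSet → Bool) (α : V → Bool)
    (A : Set V) : Set V := ⋃ n, enhSeq H r ω α A n

open scoped Classical in
/-- Set the state of the edge `e` to `b`. -/
noncomputable def flipE (H : SimpleGraph V) (ω : H.edgeSet → Bool) (e : H.edgeSet)
    (b : Bool) : H.edgeSet → Bool := Function.update ω e b

open scoped Classical in
/-- Set the state of the vertex `v` to `b`. -/
noncomputable def flipV (α : V → Bool) (v : V) (b : Bool) : V → Bool :=
  Function.update α v b

/-- The edge `e` is p-pivotal for the event `E` in the configuration `c`. -/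
def PPivotal (H : SimpleGraph V) (E : Set ((H.edgeSet → Bool) × (V → Bool)))
    (e : H.edgeSet) (c : (H.edgeSet → Bool) × (V → Bool)) : Prop :=
  (flipE H c.1 e true, c.2) ∈ E ∧ (flipE H c.1 e false, c.2) ∉ E

/-- The vertex `z` is s-pivotal for the event `E` in the configuration `c`. -/
def SPivotal (H : SimpleGraph V) (E : Set ((H.edgeSet → Bool) × (V → Bool)))
    (z : V) (c : (H.edgeSet → Bool) × (V → Bool)) : Prop :=
  (c.1, flipV c.2 z true) ∈ E ∧ (c.1, flipV c.2 z false) ∉ E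

/-- For an edge `e = {x,y}`, the set `B_R(e) = B_R(x) ∪ B_R(y)`. -/
def edgeBall (H : SimpleGraph V) (e : H.edgeSet) (R : ℕ) : Set V :=
  {z | ∃ w ∈ (e : Sym2 V), H.dist w z ≤ R}

/-- The connected component of `x` inside the subgraph of `G` induced by `S`
(as a subset of the vertices of `G`). -/
def compIn (G : SimpleGraph V) (S : Set V) (x : V) : Set V :=
  {y | ∃ w : G.Walk x y, ∀ z ∈ w.support, z ∈ S}

/-- The quotient graph `G/Γ`: vertices are the orbits, two distinct orbits being adjacent
iff some edge of `G` intersects both. -/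
def quotientGraph (G : SimpleGraph V) (Γ : Type*) [Group Γ] [MulAction Γ V] :
    SimpleGraph (Quotient (MulAction.orbitRel Γ V)) where
  Adj a b := a ≠ b ∧ ∃ x y : V, G.Adj x y ∧
      Quotient.mk (MulAction.orbitRel Γ V) x = a ∧ Quotient.mk (MulAction.orbitRel Γ V) y = b
  symm := by constructor; rintro a b ⟨hne, x, y, hxy, hx, hy⟩; exact ⟨hne.symm, y, x, hxy.symm, hy, hx⟩
  loopless := by constructor; rintro a ⟨hne, -⟩; exact hne rfl

open scoped Classical in
/-- The configuration `ω_L`: agrees with `ω` on edges inside `B_L(o)`, closed elsewhere. -/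
noncomputable def truncE (H : SimpleGraph V) (o : V) (L : ℕ) (ω : H.edgeSet → Bool) :
    H.edgeSet → Bool :=
  fun e => if ∀ z ∈ (e : Sym2 V), H.dist o z ≤ L then ω e else false

/-- The configuration `α_L`: agrees with `α` on vertices of `B_L(o)`, `0` elsewhere. -/
noncomputable def truncV (H : SimpleGraph V) (o : V) (L : ℕ) (α : V → Bool) : V → Bool :=
  fun v => if H.dist o v ≤ L then α v else false

/-- `B` is `r`-nice: finite, non-empty, and every vertex outside of `B` belongs to some
`r`-ball avoiding `B`. -/
def RNice (H : SimpleGraph V) (r : ℕ) (B : Set V) : Prop :=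
  B.Finite ∧ B.Nonempty ∧ ∀ u ∉ B, ∃ v : V, u ∈ ball H v r ∧ ∀ w ∈ ball H v r, w ∉ B

/-- Edges of a walk in a subgraph, mapped to the ambient graph, lie in the subgraph's
edge set. -/
private lemma edges_map_hom_mem {V : Type*} {G : SimpleGraph V} (T : G.Subgraph)
    {x y : T.verts} (d : T.coe.Walk x y) :
    ∀ e ∈ (d.map T.hom).edges, e ∈ T.edgeSet := by
  induction d with
  | nil => simp
  | cons h d ih =>
    intro e he
    rw [SimpleGraph.Walk.map_cons, SimpleGraph.Walk.edges_cons] at he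
    rcases List.mem_cons.mp he with rfl | he
    · exact (SimpleGraph.Subgraph.mem_edgeSet).mpr h
    · exact ih e he

/-- No cycle can have all of its edges among the edges of a path. -/
private lemma no_cycle_in_path {W : Type*} {H : SimpleGraph W} :
    ∀ {a b : W} (p : H.Walk a b), p.IsPath →
      ∀ {v : W} (c : H.Walk v v), c.IsCycle → (∀ e ∈ c.edges, e ∈ p.edges) → False := by
  intro a b p
  induction p with
  | nil =>
    intro _ v c hc hsub
    have h3 := hc.three_le_length
    have hne : c.edges ≠ [] := by
      intro hemp
      rw [← SimpleGraph.Walk.length_edges, hemp] at h3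
      simp at h3
    obtain ⟨e, he⟩ := List.exists_mem_of_ne_nil _ hne
    simpa using hsub e he
  | @cons a a' b h p ih =>
    intro hp v c hc hsub
    rw [SimpleGraph.Walk.cons_isPath_iff] at hp
    obtain ⟨hp', hans⟩ := hp
    classical
    by_cases hin : a ∈ c.support
    · set c' := c.rotate a hin with hc'def
      have hc' : c'.IsCycle := hc.rotate hin
      have hmemiff : ∀ e, e ∈ c'.edges ↔ e ∈ c.edges := fun e =>
        (SimpleGraph.Walk.rotate_edges c a hin).perm.mem_iff
      have hkey : ∀ z : W, s(a, z) ∈ c'.edges → z = a' := by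
        intro z hz
        have hz' := hsub _ ((hmemiff _).mp hz)
        rw [SimpleGraph.Walk.edges_cons, List.mem_cons] at hz'
        rcases hz' with heq | hmem
        · rcases Sym2.eq_iff.mp heq with ⟨-, h1⟩ | ⟨h1, -⟩
          · exact h1
          · exact absurd h1 h.ne
        · exact absurd (SimpleGraph.Walk.fst_mem_support_of_mem_edges p hmem) hans
      have hnn : ¬ c'.Nil := hc'.not_nil
      obtain ⟨z, hadj1, d, hcd⟩ := SimpleGraph.Walk.not_nil_iff.mp hnn
      have hz : z = a' := hkey z (by rw [hcd]; simp)
      obtain ⟨z₂, hadj2, d₂, hd₂⟩ :=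
        SimpleGraph.Walk.exists_eq_cons_of_ne
          (fun hc => h.ne (hc.trans hz)) d.reverse
      have hz₂d : s(a, z₂) ∈ d.edges := by
        have hmm : s(a, z₂) ∈ d.reverse.edges := by rw [hd₂]; simp
        rwa [SimpleGraph.Walk.edges_reverse, List.mem_reverse] at hmm
      have hz₂c : s(a, z₂) ∈ c'.edges := by
        rw [hcd, SimpleGraph.Walk.edges_cons]
        exact List.mem_cons_of_mem _ hz₂d
      have hz₂ : z₂ = a' := hkey z₂ hz₂c
      have hnodup : c'.edges.Nodup := hc'.isCircuit.isTrail.edges_nodup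
      rw [hcd, SimpleGraph.Walk.edges_cons, List.nodup_cons] at hnodup
      rw [show z₂ = z from hz₂.trans hz.symm] at hz₂d
      exact hnodup.1 hz₂d
    · refine ih hp' c hc ?_
      intro e he
      have he' := hsub e he
      rw [SimpleGraph.Walk.edges_cons, List.mem_cons] at he'
      rcases he' with rfl | hmem
      · exact absurd (SimpleGraph.Walk.fst_mem_support_of_mem_edges c he) hin
      · exact hmem

/-- The subgraph generated by a path is a tree. -/
private lemma isTree_coe_toSubgraph {W : Type*} {H : SimpleGraph W} {a b : W}
    (p : H.Walk a b) (hp : p.IsPath) : p.toSubgraph.coe.IsTree := by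
  refine ⟨SimpleGraph.Subgraph.connected_iff'.mp p.toSubgraph_connected, ?_⟩
  intro v c hc
  have hcH : (c.map p.toSubgraph.hom).IsCycle :=
    (SimpleGraph.Walk.map_isCycle_iff_of_injective
      (SimpleGraph.Subgraph.hom_injective)).mpr hc
  exact no_cycle_in_path p hp _ hcH
    (fun e he => (SimpleGraph.Walk.mem_edges_toSubgraph p).mp
      (edges_map_hom_mem _ c e he))

/-- Walks in trees can be lifted through a bijective-on-vertices correspondence. -/
private lemma lift_walk {V W : Type*} {G : SimpleGraph V} {H : SimpleGraph W} {π : V → W}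
    {T : H.Subgraph} {T' : G.Subgraph}
    (hsurj : ∀ w ∈ T.verts, ∃ z ∈ T'.verts, π z = w)
    (hadj : ∀ a b : V, a ∈ T'.verts → b ∈ T'.verts → (T'.Adj a b ↔ T.Adj (π a) (π b))) :
    ∀ {a b : W} (p : H.Walk a b), (∀ e ∈ p.edges, e ∈ T.edgeSet) →
      ∀ x₀, x₀ ∈ T'.verts → π x₀ = a →
      ∃ (z : V) (q : G.Walk x₀ z), π z = b ∧ q.length = p.length ∧ z ∈ T'.verts ∧
        ∀ y ∈ q.support, π y ∈ p.support := by
  intro a b p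
  induction p with
  | nil =>
    intro _ x₀ hx₀ hπx₀
    exact ⟨x₀, SimpleGraph.Walk.nil, hπx₀, rfl, hx₀, by simp [hπx₀]⟩
  | @cons a' c b' h p ih =>
    intro hedges x₀ hx₀ hπx₀
    have hTac : T.Adj a' c := (SimpleGraph.Subgraph.mem_edgeSet).mp (hedges _ (by simp))
    obtain ⟨z₁, hz₁v, hπz₁⟩ := hsurj c hTac.snd_mem
    have hT'adj : T'.Adj x₀ z₁ := (hadj x₀ z₁ hx₀ hz₁v).mpr (by rw [hπx₀, hπz₁]; exact hTac)
    obtain ⟨z, q, hπz, hlen, hzv, hsupp⟩ := ih (fun e he => hedges e (by simp [he])) z₁ hz₁v hπz₁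
    refine ⟨z, SimpleGraph.Walk.cons hT'adj.adj_sub q, hπz, by simp [hlen], hzv, ?_⟩
    intro y hy
    rw [SimpleGraph.Walk.support_cons, List.mem_cons] at hy
    rw [SimpleGraph.Walk.support_cons]
    rcases hy with rfl | hy
    · rw [hπx₀]; exact List.mem_cons_self
    · exact List.mem_cons_of_mem _ (hsupp y hy)

/-- **Lemma (choice of the pattern radius).**
There is `r ≥ 1` such that for every `x ∈ V(G)`, the connected component `Z = Z(x,r)` of
`x` in `π⁻¹(B_r(π x)) ∩ B_{3r}(x)` satisfies: every `u` at distance exactly `r+1` from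
`π x` has at least two distinct preimages adjacent to `Z`. -/
theorem exists_pattern_radius {V W : Type*} (G : SimpleGraph V) (H : SimpleGraph W)
    (hGconn : G.Connected) (hHconn : H.Connected)
    (hGlf : LocallyFinite' G) (hHlf : LocallyFinite' H)
    (π : V → W) (hπ : IsWeakCover G H π)
    (htame : TameFibres G π) (hdtl : HasDisjointTreeLifting G H π) :
    ∃ r : ℕ, 1 ≤ r ∧ ∀ x : V, ∀ u : W, H.dist (π x) u = r + 1 →
      ∃ y₁ y₂ : V, y₁ ≠ y₂ ∧ π y₁ = u ∧ π y₂ = u ∧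
        (∃ z₁ ∈ compIn G (π ⁻¹' ball H (π x) r ∩ ball G x (3 * r)) x, G.Adj z₁ y₁) ∧
        (∃ z₂ ∈ compIn G (π ⁻¹' ball H (π x) r ∩ ball G x (3 * r)) x, G.Adj z₂ y₂) := by
  classical
  obtain ⟨R, hR⟩ := htame
  refine ⟨max R 1, le_max_right R 1, ?_⟩
  set r := max R 1 with hrdef
  intro x u hdistu
  -- a geodesic path from `π x` to `u`
  obtain ⟨p₀, hp₀⟩ := (hHconn (π x) u).exists_walk_length_eq_dist
  set p := p₀.bypass with hpdef
  have hppath : p.IsPath := p₀.bypass_isPath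
  have hplen : p.length = r + 1 := by
    have h1 : p.length ≤ r + 1 := by
      rw [← hdistu, ← hp₀]; exact p₀.length_bypass_le
    have h2 : r + 1 ≤ p.length := by
      rw [← hdistu]; exact SimpleGraph.dist_le p
    omega
  have hne : u ≠ π x := by
    intro hcl
    rw [hcl, SimpleGraph.dist_self] at hdistu
    omega
  obtain ⟨v, hadj_uv, q, hq⟩ := SimpleGraph.Walk.exists_eq_cons_of_ne hne p.reverse
  have hqlen : q.length = r := by
    have hl := congrArg SimpleGraph.Walk.length hq
    rw [SimpleGraph.Walk.length_reverse, hplen, SimpleGraph.Walk.length_cons] at hl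
    omega
  set T := p.toSubgraph with hTdef
  have hTtree : T.coe.IsTree := isTree_coe_toSubgraph p hppath
  obtain ⟨x', hπxx', hposdist, hdistR⟩ := hR x
  have hxx' : x ≠ x' := by
    intro hcl
    rw [hcl, SimpleGraph.dist_self] at hposdist
    omega
  have hπxT : π x ∈ T.verts := p.start_mem_verts_toSubgraph
  obtain ⟨Tx, Ty, hLx, hLy, hxTx, hx'Ty, hdisj⟩ := hdtl T hTtree x x' hxx' hπxx' hπxT
  -- edges of the truncated geodesic lie in `T`
  have hedges : ∀ e ∈ q.reverse.edges, e ∈ T.edgeSet := by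
    intro e he
    rw [SimpleGraph.Walk.edges_reverse, List.mem_reverse] at he
    have he2 : e ∈ p.reverse.edges := by
      rw [hq, SimpleGraph.Walk.edges_cons]; exact List.mem_cons_of_mem _ he
    rw [SimpleGraph.Walk.edges_reverse, List.mem_reverse] at he2
    exact (SimpleGraph.Walk.mem_edges_toSubgraph p).mpr he2
  have hTadj_vu : T.Adj v u := by
    have h1 : s(u, v) ∈ p.reverse.edges := by rw [hq]; simp
    rw [SimpleGraph.Walk.edges_reverse, List.mem_reverse] at h1
    exact ((SimpleGraph.Subgraph.mem_edgeSet).mp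
      ((SimpleGraph.Walk.mem_edges_toSubgraph p).mpr h1)).symm
  have huT : u ∈ T.verts := p.end_mem_verts_toSubgraph
  -- lift through `Tx` from `x`, through `Ty` from `x'`
  have hsurjx : ∀ w ∈ T.verts, ∃ z ∈ Tx.verts, π z = w := by
    intro w hw
    obtain ⟨z, hz, hπz⟩ := hLx.2.1.surjOn hw
    exact ⟨z, hz, hπz⟩
  have hsurjy : ∀ w ∈ T.verts, ∃ z ∈ Ty.verts, π z = w := by
    intro w hw
    obtain ⟨z, hz, hπz⟩ := hLy.2.1.surjOn hw
    exact ⟨z, hz, hπz⟩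
  obtain ⟨z₁, W₁, hπz₁, hW₁len, hz₁v, hW₁supp⟩ :=
    lift_walk hsurjx hLx.2.2 q.reverse hedges x hxTx rfl
  obtain ⟨z₂, W₂, hπz₂, hW₂len, hz₂v, hW₂supp⟩ :=
    lift_walk hsurjy hLy.2.2 q.reverse hedges x' hx'Ty hπxx'.symm
  -- the two preimages of `u`
  obtain ⟨y₁, hy₁v, hπy₁⟩ := hsurjx u huT
  obtain ⟨y₂, hy₂v, hπy₂⟩ := hsurjy u huT
  have hadj₁ : G.Adj z₁ y₁ :=
    ((hLx.2.2 z₁ y₁ hz₁v hy₁v).mpr (by rw [hπz₁, hπy₁]; exact hTadj_vu)).adj_sub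
  have hadj₂ : G.Adj z₂ y₂ :=
    ((hLy.2.2 z₂ y₂ hz₂v hy₂v).mpr (by rw [hπz₂, hπy₂]; exact hTadj_vu)).adj_sub
  have hne12 : y₁ ≠ y₂ := by
    intro hcl
    exact (Set.disjoint_left.mp hdisj hy₁v) (hcl ▸ hy₂v)
  have hqrlen : q.reverse.length = r := by rw [SimpleGraph.Walk.length_reverse, hqlen]
  have hr1 : 1 ≤ r := le_max_right R 1
  -- every vertex of the lifted walks projects within distance `r` of `π x`
  have hball : ∀ y : V, π y ∈ q.reverse.support → π y ∈ ball H (π x) r := by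
    intro y hy
    have h1 : H.dist (π x) (π y) ≤ (q.reverse.takeUntil (π y) hy).length :=
      SimpleGraph.dist_le _
    have h2 := SimpleGraph.Walk.length_takeUntil_le q.reverse hy
    show H.dist (π x) (π y) ≤ r
    omega
  -- the walk from `x` to `x'` realising their distance
  obtain ⟨g, hg⟩ := hGconn.exists_walk_length_eq_dist x x'
  have hglen : g.length ≤ r := by
    rw [hg]
    exact le_trans hdistR (le_max_left R 1)
  refine ⟨y₁, y₂, hne12, hπy₁, hπy₂, ⟨z₁, ⟨W₁, ?_⟩, hadj₁⟩,
    ⟨z₂, ⟨g.append W₂, ?_⟩, hadj₂⟩⟩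
  · -- supports of `W₁` stay in the component set
    intro y hy
    refine ⟨hball y (hW₁supp y hy), ?_⟩
    have h1 : G.dist x y ≤ (W₁.takeUntil y hy).length := SimpleGraph.dist_le _
    have h2 := SimpleGraph.Walk.length_takeUntil_le W₁ hy
    show G.dist x y ≤ 3 * r
    omega
  · -- supports of `g.append W₂` stay in the component set
    intro y hy
    rw [SimpleGraph.Walk.mem_support_append_iff] at hy
    rcases hy with hy | hy
    · have h1 : G.dist x y ≤ (g.takeUntil y hy).length := SimpleGraph.dist_le _
      have h2 := SimpleGraph.Walk.length_takeUntil_le g hy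
      have h3 : G.dist x y ≤ r := by omega
      refine ⟨?_, ?_⟩
      · have h4 := hπ.lipschitz x y
        show H.dist (π x) (π y) ≤ r
        omega
      · show G.dist x y ≤ 3 * r
        omega
    · refine ⟨hball y (hW₂supp y hy), ?_⟩
      have h1 : G.dist x y ≤ (g.append (W₂.takeUntil y hy)).length :=
        SimpleGraph.dist_le _
      rw [SimpleGraph.Walk.length_append] at h1
      have h2 := SimpleGraph.Walk.length_takeUntil_le W₂ hy
      show G.dist x y ≤ 3 * r
      omega


end Percolation
end

section
/- Let G and H be quasi-transitive graphs, and let π : V(G) → V(H) be a non-injective weak covering map with the disjoint tree-lifting property. Then π has tame fibres. -/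
open MeasureTheory

namespace Percolation

variable {V : Type*} {W : Type*}

section TameAux

open SimpleGraph

variable {V₁ W₁ X₁ : Type*} {G : SimpleGraph V₁} {H : SimpleGraph W₁} {K : SimpleGraph X₁}

private lemma iso_dist_le (φ : G ≃g H) (x y : V₁) : H.dist (φ x) (φ y) ≤ G.dist x y := by
  by_cases h : G.Reachable x y
  · obtain ⟨p, hp⟩ := h.exists_walk_length_eq_dist
    calc H.dist (φ x) (φ y) ≤ (p.map φ.toHom).length := SimpleGraph.dist_le _
      _ = G.dist x y := by rw [SimpleGraph.Walk.length_map, hp]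
  · rw [SimpleGraph.dist_eq_zero_of_not_reachable h,
      SimpleGraph.dist_eq_zero_of_not_reachable]
    intro hr
    exact h ⟨(hr.some.map φ.symm.toHom).copy (φ.symm_apply_apply x) (φ.symm_apply_apply y)⟩

private lemma iso_dist (φ : G ≃g H) (x y : V₁) : H.dist (φ x) (φ y) = G.dist x y := by
  refine le_antisymm (iso_dist_le φ x y) ?_
  have := iso_dist_le φ.symm (φ x) (φ y)
  simpa using this

private lemma ball_finite (hconn : G.Connected) (hlf : Percolation.LocallyFinite' G) :
    ∀ (n : ℕ) (x : V₁), {y | G.dist x y ≤ n}.Finite := by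
  intro n
  induction n with
  | zero =>
    intro x
    apply (Set.finite_singleton x).subset
    intro y hy
    simp only [Set.mem_setOf_eq, Nat.le_zero] at hy
    simp [(hconn.dist_eq_zero_iff.mp hy).symm]
  | succ n ih =>
    intro x
    have hsub : {y | G.dist x y ≤ n + 1} ⊆
        {x} ∪ ⋃ z ∈ G.neighborSet x, {y | G.dist z y ≤ n} := by
      intro y hy
      simp only [Set.mem_setOf_eq] at hy
      by_cases hxy : x = y
      · exact Or.inl hxy.symm
      · have hne : G.dist x y ≠ 0 := by
          rw [ne_eq, hconn.dist_eq_zero_iff]; exact hxy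
        obtain ⟨p, hp⟩ := SimpleGraph.exists_walk_of_dist_ne_zero hne
        cases p with
        | nil => exact absurd rfl hxy
        | @cons _ z _ h q =>
          have hq : q.length ≤ n := by
            have hlen : q.length + 1 = G.dist x y := by simpa using hp
            omega
          exact Or.inr (Set.mem_biUnion h ((SimpleGraph.dist_le q).trans hq))
    exact (((Set.finite_singleton x).union ((hlf x).biUnion (fun z _ => ih z)))).subset hsub

private lemma wc_comp {π : V₁ → W₁} {ρ : W₁ → X₁} (h1 : Percolation.IsWeakCover G H π)
    (h2 : Percolation.IsWeakCover H K ρ) :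
    Percolation.IsWeakCover G K (fun v => ρ (π v)) := by
  constructor
  · intro x y
    exact le_trans (h2.lipschitz _ _) (h1.lipschitz x y)
  · intro x u hadj
    obtain ⟨w, hw, hwu⟩ := h2.lift (π x) u hadj
    obtain ⟨y, hy, hyw⟩ := h1.lift x w hw
    exact ⟨y, hy, by rw [hyw, hwu]⟩

private lemma iso_wc (φ : G ≃g H) : Percolation.IsWeakCover G H φ := by
  constructor
  · intro x y
    exact le_of_eq (iso_dist φ x y)
  · intro x u hadj
    refine ⟨φ.symm u, ?_, φ.apply_symm_apply u⟩
    exact φ.map_rel_iff.mp (by rwa [φ.apply_symm_apply])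

private lemma wc_walk_lift {π : V₁ → W₁} (hGconn : G.Connected)
    (hπ : Percolation.IsWeakCover G H π) :
    ∀ {w w' : W₁} (p : H.Walk w w') (x : V₁), π x = w →
      ∃ y : V₁, π y = w' ∧ G.dist x y ≤ p.length := by
  intro w w' p
  induction p with
  | nil => exact fun x hx => ⟨x, hx, by simp⟩
  | @cons a b c hadj q ih =>
    intro x hx
    obtain ⟨y₀, hy₀adj, hy₀⟩ := hπ.lift x b (by rw [hx]; exact hadj)
    obtain ⟨y, hy, hyd⟩ := ih y₀ hy₀
    refine ⟨y, hy, ?_⟩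
    have htri := hGconn.dist_triangle (u := x) (v := y₀) (w := y)
    have h1 : G.dist x y₀ ≤ 1 := by
      simpa using SimpleGraph.dist_le (SimpleGraph.Walk.cons hy₀adj SimpleGraph.Walk.nil)
    simp only [SimpleGraph.Walk.length_cons]
    omega

private lemma wc_dist_lift {π : V₁ → W₁} (hGconn : G.Connected) (hHconn : H.Connected)
    (hπ : Percolation.IsWeakCover G H π) (x : V₁) (w : W₁) :
    ∃ y : V₁, π y = w ∧ G.dist x y ≤ H.dist (π x) w := by
  obtain ⟨p, hp⟩ := hHconn.exists_walk_length_eq_dist (π x) w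
  obtain ⟨y, hy, hyd⟩ := wc_walk_lift hGconn hπ p x rfl
  exact ⟨y, hy, by omega⟩

private lemma isTree_edge {v w : W₁} (h : H.Adj v w) : (H.subgraphOfAdj h).coe.IsTree := by
  refine ⟨(SimpleGraph.Subgraph.subgraphOfAdj_connected h).coe, ?_⟩
  intro x c hc
  have h3 := hc.three_le_length
  have hnd : c.support.tail.Nodup := hc.support_nodup
  have hlen3 : 3 ≤ c.support.tail.length := by
    have h1 : c.support.length = c.length + 1 := c.length_support
    have h2 : c.support.tail.length = c.support.length - 1 := by simp
    omega
  set l := c.support.tail with hldef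
  have key : ∀ (i j : ℕ) (hi : i < l.length) (hj : j < l.length), i ≠ j →
      l.get ⟨i, hi⟩ ≠ l.get ⟨j, hj⟩ := by
    intro i j hi hj hij heq
    exact hij (congrArg Fin.val ((List.Nodup.get_inj_iff hnd).mp heq))
  have hv : ∀ (i : ℕ) (hi : i < l.length),
      (l.get ⟨i, hi⟩ : W₁) = v ∨ (l.get ⟨i, hi⟩ : W₁) = w := by
    intro i hi
    have h2 : (l.get ⟨i, hi⟩ : W₁) ∈ ({v, w} : Set W₁) := (l.get ⟨i, hi⟩).2
    rcases h2 with h2 | h2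
    · exact Or.inl h2
    · exact Or.inr h2
  have hi0 : 0 < l.length := by omega
  have hi1 : 1 < l.length := by omega
  have hi2 : 2 < l.length := by omega
  rcases hv 0 hi0 with h0 | h0 <;> rcases hv 1 hi1 with h1 | h1 <;>
      rcases hv 2 hi2 with h2 | h2 <;>
    first
      | exact key 0 1 hi0 hi1 (by omega) (Subtype.ext (h0.trans h1.symm))
      | exact key 0 2 hi0 hi2 (by omega) (Subtype.ext (h0.trans h2.symm))
      | exact key 1 2 hi1 hi2 (by omega) (Subtype.ext (h1.trans h2.symm))


private lemma exists_adj_dist_le {n : ℕ} (hconn : H.Connected) {u v : W₁}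
    (h : H.dist u v = n + 1) : ∃ w : W₁, H.Adj u w ∧ H.dist w v ≤ n := by
  obtain ⟨p, hp⟩ := hconn.exists_walk_length_eq_dist u v
  cases p with
  | nil =>
    exfalso
    rw [SimpleGraph.Walk.length_nil, h] at hp
    omega
  | @cons _ z _ hadj q =>
    refine ⟨z, hadj, ?_⟩
    have hq : q.length ≤ n := by
      rw [SimpleGraph.Walk.length_cons, h] at hp
      omega
    exact (SimpleGraph.dist_le q).trans hq

private lemma dtl_transport {π : V₁ → W₁} (hGconn : G.Connected) (hHconn : H.Connected)
    (hdtl : Percolation.HasDisjointTreeLifting G H π) :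
    ∀ (n : ℕ) (z z' x : V₁), π z = π z' → z ≠ z' → H.dist (π x) (π z) ≤ n →
      ∃ p p' : V₁, π p = π x ∧ π p' = π x ∧ p ≠ p' ∧ G.dist z p ≤ n ∧ G.dist z' p' ≤ n := by
  intro n
  induction n with
  | zero =>
    intro z z' x hzz hne hd
    have hxz : π x = π z := hHconn.dist_eq_zero_iff.mp (Nat.le_zero.mp hd)
    exact ⟨z, z', hxz.symm, by rw [← hzz, hxz], hne, by simp, by simp⟩
  | succ n ih =>
    intro z z' x hzz hne hd
    by_cases hle : H.dist (π x) (π z) ≤ n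
    · obtain ⟨p, p', h1, h2, h3, h4, h5⟩ := ih z z' x hzz hne hle
      exact ⟨p, p', h1, h2, h3, h4.trans (by omega), h5.trans (by omega)⟩
    · have hdist : H.dist (π z) (π x) = n + 1 := by
        rw [SimpleGraph.dist_comm]
        omega
      obtain ⟨u, hadj, hdu'⟩ := exists_adj_dist_le hHconn hdist
      · have hdu : H.dist (π x) u ≤ n := by
          rw [SimpleGraph.dist_comm]
          exact hdu'
        obtain ⟨T1, T2, hL1, hL2, hz1, hz2, hdisj⟩ :=
          hdtl (H.subgraphOfAdj hadj) (isTree_edge hadj) z z' hne hzz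
            (by simp)
        obtain ⟨hT1tree, hT1bij, hT1adj⟩ := hL1
        obtain ⟨hT2tree, hT2bij, hT2adj⟩ := hL2
        obtain ⟨y1, hy1v, hy1⟩ := hT1bij.2.2 (show u ∈ (H.subgraphOfAdj hadj).verts by simp)
        obtain ⟨y2, hy2v, hy2⟩ := hT2bij.2.2 (show u ∈ (H.subgraphOfAdj hadj).verts by simp)
        have hzy1 : G.Adj z y1 := by
          refine T1.adj_sub ((hT1adj z y1 hz1 hy1v).mpr ?_)
          show s(π z, u) = s(π z, π y1)
          rw [hy1]
        have hzy2 : G.Adj z' y2 := by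
          refine T2.adj_sub ((hT2adj z' y2 hz2 hy2v).mpr ?_)
          show s(π z, u) = s(π z', π y2)
          rw [hy2, hzz]
        have hy12 : y1 ≠ y2 := by
          intro hcon
          exact Set.disjoint_left.mp hdisj hy1v (hcon ▸ hy2v)
        have hyy : π y1 = π y2 := by rw [hy1, hy2]
        obtain ⟨pp, pp', hp1, hp2, hp3, hp4, hp5⟩ :=
          ih y1 y2 x hyy hy12 (by rw [hy1]; exact hdu)
        refine ⟨pp, pp', hp1, hp2, hp3, ?_, ?_⟩
        · have := hGconn.dist_triangle (u := z) (v := y1) (w := pp)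
          have h1 : G.dist z y1 ≤ 1 := by
            simpa using SimpleGraph.dist_le (SimpleGraph.Walk.cons hzy1 SimpleGraph.Walk.nil)
          omega
        · have := hGconn.dist_triangle (u := z') (v := y2) (w := pp')
          have h1 : G.dist z' y2 ≤ 1 := by
            simpa using SimpleGraph.dist_le (SimpleGraph.Walk.cons hzy2 SimpleGraph.Walk.nil)
          omega

private lemma mate_of_pair {π : V₁ → W₁} (hGconn : G.Connected) (hHconn : H.Connected)
    (hπ : Percolation.IsWeakCover G H π)
    (hdtl : Percolation.HasDisjointTreeLifting G H π)
    {z z' : V₁} (hzz : π z = π z') (hne : z ≠ z') (x : V₁) :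
    ∃ y : V₁, π x = π y ∧ y ≠ x ∧ G.dist x y ≤ 2 * G.dist x z + G.dist z z' := by
  have hlips : H.dist (π x) (π z) ≤ G.dist x z := hπ.lipschitz x z
  obtain ⟨p, p', h1, h2, h3, h4, h5⟩ :=
    dtl_transport hGconn hHconn hdtl (H.dist (π x) (π z)) z z' x hzz hne le_rfl
  by_cases hpx : p = x
  · refine ⟨p', h2.symm, fun hcon => h3 (hpx ▸ hcon.symm ▸ rfl), ?_⟩
    have ht1 := hGconn.dist_triangle (u := x) (v := z') (w := p')
    have ht2 := hGconn.dist_triangle (u := x) (v := z) (w := z')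
    omega
  · refine ⟨p, h1.symm, hpx, ?_⟩
    have ht1 := hGconn.dist_triangle (u := x) (v := z) (w := p)
    omega

private lemma ultra_const {α β : Type*} (F : Ultrafilter α) (f : α → β) (S : Set β)
    (hS : S.Finite) (hmem : {k | f k ∈ S} ∈ F) : ∃ w : β, {k | f k = w} ∈ F := by
  have heq : {k | f k ∈ S} = ⋃ w ∈ S, {k | f k = w} := by
    ext k
    simp
  rw [heq] at hmem
  obtain ⟨w, _, hw⟩ := (Ultrafilter.finite_biUnion_mem_iff hS).mp hmem
  exact ⟨w, hw⟩

private lemma eventually_agree {α β γ : Type*} (F : Ultrafilter α) (g : α → β → γ) (Φ : β → γ)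
    (h : ∀ v : β, {k | g k v = Φ v} ∈ F) (A : Finset β) :
    {k | ∀ v ∈ A, g k v = Φ v} ∈ F := by
  classical
  induction A using Finset.induction_on with
  | empty =>
    have : {k : α | ∀ v ∈ (∅ : Finset β), g k v = Φ v} = Set.univ := by simp
    rw [this]
    exact Filter.univ_mem
  | @insert a A _ ih =>
    have h2 := Filter.inter_mem (h a) ih
    refine Filter.mem_of_superset h2 ?_
    rintro k ⟨hk1, hk2⟩ v hv
    rcases Finset.mem_insert.mp hv with rfl | hv
    · exact hk1
    · exact hk2 v hv

private lemma selfcover_injective (hHconn : H.Connected) (hHlf : Percolation.LocallyFinite' H)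
    (hqtH : Percolation.QuasiTransitive H) (lam : W₁ → W₁)
    (hlam : Percolation.IsWeakCover H H lam) : Function.Injective lam := by
  classical
  obtain ⟨S, hSfin, hSall⟩ := hqtH
  -- iterates are weak covers
  have hiter : ∀ m : ℕ, Percolation.IsWeakCover H H (lam^[m]) := by
    intro m
    induction m with
    | zero =>
      constructor
      · intro x y; simp
      · intro x u hadj; exact ⟨u, hadj, rfl⟩
    | succ m ih =>
      have := wc_comp ih hlam
      have heq : (fun v => lam (lam^[m] v)) = lam^[m + 1] := by
        funext v
        rw [Function.iterate_succ_apply' lam m v]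
      rwa [heq] at this
  -- ball image equalities under graph automorphisms
  have hball : ∀ (γ : H ≃g H) (z : W₁) (n : ℕ),
      γ '' {y | H.dist z y ≤ n} = {y | H.dist (γ z) y ≤ n} := by
    intro γ z n
    ext y
    constructor
    · rintro ⟨y', hy', rfl⟩
      simp only [Set.mem_setOf_eq] at hy' ⊢
      rw [iso_dist γ z y']
      exact hy'
    · intro hy
      simp only [Set.mem_setOf_eq] at hy
      refine ⟨γ.symm y, ?_, γ.apply_symm_apply y⟩
      simp only [Set.mem_setOf_eq]
      have := iso_dist γ z (γ.symm y)
      rw [γ.apply_symm_apply] at this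
      omega
  -- main step : if two iterates land in the same orbit, lam is injective
  have key : ∀ (k l : ℕ) (z : W₁) (γ : H ≃g H), 0 < l - k → γ (lam^[k] z) = lam^[l] z →
      Function.Injective lam := by
    intro k l z γ hkl hγ
    set m := l - k with hm
    set z₀ := lam^[k] z with hz₀
    set μ := lam^[m] with hμ
    have hμz : μ z₀ = lam^[l] z := by
      have h1 : m + k = l := by omega
      rw [hμ, hz₀, ← Function.iterate_add_apply, h1]
    have hμwc := hiter m
    -- μ is injective on each ball around z₀
    have hinjball : ∀ n : ℕ, ∀ x ∈ {y | H.dist z₀ y ≤ n}, ∀ x' ∈ {y | H.dist z₀ y ≤ n},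
        μ x = μ x' → x = x' := by
      intro n
      have hfin : {y | H.dist z₀ y ≤ n}.Finite := ball_finite hHconn hHlf n z₀
      have hfin' : {y | H.dist (μ z₀) y ≤ n}.Finite := ball_finite hHconn hHlf n (μ z₀)
      have hmaps : ∀ x ∈ {y | H.dist z₀ y ≤ n}, μ x ∈ {y | H.dist (μ z₀) y ≤ n} := by
        intro x hx
        simp only [Set.mem_setOf_eq] at hx ⊢
        exact le_trans (hμwc.lipschitz z₀ x) hx
      have hsurj : ∀ b ∈ {y | H.dist (μ z₀) y ≤ n}, ∃ a ∈ {y | H.dist z₀ y ≤ n}, μ a = b := by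
        intro b hb
        simp only [Set.mem_setOf_eq] at hb
        obtain ⟨a, ha, had⟩ := wc_dist_lift hHconn hHconn hμwc z₀ b
        have hc : H.dist (lam^[m] z₀) b = H.dist (μ z₀) b := rfl
        exact ⟨a, by simp only [Set.mem_setOf_eq]; omega, ha⟩
      have hcard : {y | H.dist z₀ y ≤ n}.ncard ≤ {y | H.dist (μ z₀) y ≤ n}.ncard := by
        have himg := hball γ z₀ n
        have hγz : γ z₀ = μ z₀ := by rw [hγ, hμz]
        rw [hγz] at himg
        have h1 : {y | H.dist z₀ y ≤ n}.ncard = {y | H.dist (μ z₀) y ≤ n}.ncard := by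
          rw [← himg, Set.ncard_image_of_injective _ γ.injective]
        exact le_of_eq h1
      intro x hx x' hx' hxx
      exact Set.inj_on_of_surj_on_of_ncard_le (f := fun a _ => μ a) (fun a ha => hmaps a ha)
        (fun b hb => by obtain ⟨a, ha, hab⟩ := hsurj b hb; exact ⟨a, ha, hab⟩)
        hcard hx hx' hxx hfin
    have hμinj : Function.Injective μ := by
      intro x x' hxx
      have hd1 : H.dist z₀ x ≤ max (H.dist z₀ x) (H.dist z₀ x') := le_max_left _ _
      have hd2 : H.dist z₀ x' ≤ max (H.dist z₀ x) (H.dist z₀ x') := le_max_right _ _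
      exact hinjball (max (H.dist z₀ x) (H.dist z₀ x')) x hd1 x' hd2 hxx
    intro a b hab
    have : μ a = μ b := by
      have hm1 : m = (m - 1) + 1 := by omega
      rw [hμ, hm1, Function.iterate_succ_apply, Function.iterate_succ_apply, hab]
    exact hμinj this
  -- pigeonhole on orbits of iterates
  obtain ⟨v₀⟩ := hHconn.nonempty
  set SF := hSfin.toFinset with hSF
  set rep : ℕ → W₁ := fun n => (hSall (lam^[n] v₀)).choose with hrep
  have hrepmem : ∀ n : ℕ, rep n ∈ SF := by
    intro n
    rw [hSF, Set.Finite.mem_toFinset]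
    exact (hSall (lam^[n] v₀)).choose_spec.1
  have hrepiso : ∀ n : ℕ, ∃ φ : H ≃g H, φ (rep n) = lam^[n] v₀ := by
    intro n
    exact (hSall (lam^[n] v₀)).choose_spec.2
  have hmapsto : ∀ n ∈ Finset.range (SF.card + 1), rep n ∈ SF := fun n _ => hrepmem n
  have hcard : SF.card < (Finset.range (SF.card + 1)).card := by simp
  obtain ⟨k, hk, l, hl, hkl, hrepeq⟩ :=
    Finset.exists_ne_map_eq_of_card_lt_of_maps_to hcard hmapsto
  rcases Nat.lt_or_ge k l with h | h
  · obtain ⟨φk, hφk⟩ := hrepiso k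
    obtain ⟨φl, hφl⟩ := hrepiso l
    refine key k l v₀ (φk.symm.trans φl) (by omega) ?_
    show φl (φk.symm (lam^[k] v₀)) = lam^[l] v₀
    rw [← hφk, φk.symm_apply_apply, hrepeq, hφl]
  · have hlk : l < k := by omega
    obtain ⟨φk, hφk⟩ := hrepiso k
    obtain ⟨φl, hφl⟩ := hrepiso l
    refine key l k v₀ (φl.symm.trans φk) (by omega) ?_
    show φk (φl.symm (lam^[l] v₀)) = lam^[k] v₀
    rw [← hφl, φl.symm_apply_apply, ← hrepeq, hφk]

end TameAux


/-- **Lemma (tameness of fibres).**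
A non-injective weak covering map between quasi-transitive graphs with the disjoint
tree-lifting property has tame fibres. -/
theorem tameFibres_of_disjointTreeLifting {V W : Type*}
    (G : SimpleGraph V) (H : SimpleGraph W)
    (hGconn : G.Connected) (hHconn : H.Connected)
    (hGlf : LocallyFinite' G) (hHlf : LocallyFinite' H)
    (hqtG : QuasiTransitive G) (hqtH : QuasiTransitive H)
    (π : V → W) (hπ : IsWeakCover G H π)
    (hni : ¬ Function.Injective π)
    (hdtl : HasDisjointTreeLifting G H π) :
    TameFibres G π := by
  classical
  by_contra htame
  obtain ⟨a, b, hab, hneab⟩ := Function.not_injective_iff.mp hni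
  have hx : ∀ n : ℕ, ∃ x : V, ∀ y : V, ¬(π x = π y ∧ 0 < G.dist x y ∧ G.dist x y ≤ n) := by
    intro n
    rcases not_forall.mp (not_exists.mp htame n) with ⟨x, hx⟩
    exact ⟨x, not_exists.mp hx⟩
  set xx : ℕ → V := fun n => (hx n).choose with hxxdef
  have hxx : ∀ n (y : V), ¬(π (xx n) = π y ∧ 0 < G.dist (xx n) y ∧ G.dist (xx n) y ≤ n) :=
    fun n => (hx n).choose_spec
  obtain ⟨SG, hSGf, hSGall⟩ := hqtG
  obtain ⟨SH, hSHf, hSHall⟩ := hqtH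
  set sG : ℕ → V := fun n => (hSGall (xx n)).choose with hsGdef
  have hsGmem : ∀ n, sG n ∈ SG := fun n => (hSGall (xx n)).choose_spec.1
  have hsGiso : ∀ n, ∃ φ : G ≃g G, φ (sG n) = xx n := fun n => (hSGall (xx n)).choose_spec.2
  set φf : ℕ → (G ≃g G) := fun n => (hsGiso n).choose with hφdef
  have hφ : ∀ n, (φf n) (sG n) = xx n := fun n => (hsGiso n).choose_spec
  set sH : ℕ → W := fun n => (hSHall (π (xx n))).choose with hsHdef
  have hsHmem : ∀ n, sH n ∈ SH := fun n => (hSHall (π (xx n))).choose_spec.1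
  have hsHiso : ∀ n, ∃ ψ : H ≃g H, ψ (sH n) = π (xx n) :=
    fun n => (hSHall (π (xx n))).choose_spec.2
  set ψf : ℕ → (H ≃g H) := fun n => (hsHiso n).choose with hψdef
  have hψ : ∀ n, (ψf n) (sH n) = π (xx n) := fun n => (hsHiso n).choose_spec
  set F : Ultrafilter ℕ := Filter.hyperfilter ℕ with hFdef
  obtain ⟨st, hst⟩ := ultra_const F (fun n => ((sG n : V), (sH n : W))) (SG ×ˢ SH)
      (hSGf.prod hSHf) (by
        refine Filter.univ_mem' ?_
        intro n
        exact ⟨hsGmem n, hsHmem n⟩)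
  set s : V := st.1 with hsdef
  set t : W := st.2 with htdef
  set E₀ : Set ℕ := {n | (sG n, sH n) = st} with hE₀def
  have hE₀ : E₀ ∈ F := hst
  set πn : ℕ → V → W := fun n v => (ψf n).symm (π ((φf n) v)) with hπndef
  have hWC : ∀ n, IsWeakCover G H (πn n) := by
    intro n
    exact wc_comp (wc_comp (iso_wc (φf n)) hπ) (iso_wc (ψf n).symm)
  have hsGn : ∀ n ∈ E₀, sG n = s := by
    intro n hn
    have := congrArg Prod.fst hn
    simpa using this
  have hsHn : ∀ n ∈ E₀, sH n = t := by
    intro n hn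
    have := congrArg Prod.snd hn
    simpa using this
  have hφs : ∀ n ∈ E₀, (φf n) s = xx n := by
    intro n hn
    rw [← hsGn n hn]
    exact hφ n
  have hπns : ∀ n ∈ E₀, πn n s = t := by
    intro n hn
    show (ψf n).symm (π ((φf n) s)) = t
    rw [hφs n hn, ← hψ n, (ψf n).symm_apply_apply, hsHn n hn]
  have hkey : ∀ n ∈ E₀, ∀ v v' : V, v ≠ v' → πn n v = πn n v' →
      (n : ℕ) < 2 * G.dist s v + G.dist v v' := by
    intro n hn v v' hne heq
    have hππ : π ((φf n) v) = π ((φf n) v') := by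
      have h0 : (ψf n) ((ψf n).symm (π ((φf n) v))) = (ψf n) ((ψf n).symm (π ((φf n) v'))) :=
        congrArg (ψf n) heq
      rwa [(ψf n).apply_symm_apply, (ψf n).apply_symm_apply] at h0
    have hnefv : (φf n) v ≠ (φf n) v' := fun hcon => hne ((φf n).injective hcon)
    obtain ⟨y, hy1, hy2, hy3⟩ := mate_of_pair hGconn hHconn hπ hdtl hππ hnefv (xx n)
    have hd1 : G.dist (xx n) ((φf n) v) = G.dist s v := by
      rw [← hφs n hn, iso_dist]
    have hd2 : G.dist ((φf n) v) ((φf n) v') = G.dist v v' := iso_dist (φf n) v v'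
    rw [hd1, hd2] at hy3
    have hpos : 0 < G.dist (xx n) y := hGconn.pos_dist_of_ne (fun hcon2 => hy2 hcon2.symm)
    by_contra hle
    push_neg at hle
    exact hxx n y ⟨hy1, hpos, by omega⟩
  have hcand : ∀ v : V, ∃ w : W, {k | πn k v = w} ∈ F := by
    intro v
    apply ultra_const F (fun k => πn k v) {w | H.dist t w ≤ G.dist s v}
      (ball_finite hHconn hHlf (G.dist s v) t)
    refine Filter.mem_of_superset hE₀ ?_
    intro k hk
    simp only [Set.mem_setOf_eq]
    calc H.dist t (πn k v) = H.dist (πn k s) (πn k v) := by rw [hπns k hk]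
      _ ≤ G.dist s v := (hWC k).lipschitz s v
  set Φ : V → W := fun v => (hcand v).choose with hΦdef
  have hΦF : ∀ v, {k | πn k v = Φ v} ∈ F := fun v => (hcand v).choose_spec
  have hagree : ∀ A : Finset V, {k | ∀ v ∈ A, πn k v = Φ v} ∈ F :=
    fun A => eventually_agree F (fun k v => πn k v) Φ hΦF A
  have hΦlip : ∀ v v' : V, H.dist (Φ v) (Φ v') ≤ G.dist v v' := by
    intro v v'
    obtain ⟨k, hk⟩ := Filter.nonempty_of_mem (hagree {v, v'})
    have h1 : πn k v = Φ v := hk v (by simp)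
    have h2 : πn k v' = Φ v' := hk v' (by simp)
    rw [← h1, ← h2]
    exact (hWC k).lipschitz v v'
  have hΦlift : ∀ (v : V) (u : W), H.Adj (Φ v) u → ∃ y : V, G.Adj v y ∧ Φ y = u := by
    intro v u hadj
    obtain ⟨k, hk⟩ := Filter.nonempty_of_mem (hagree (insert v (hGlf v).toFinset))
    have h1 : πn k v = Φ v := hk v (Finset.mem_insert_self _ _)
    obtain ⟨y, hy1, hy2⟩ := (hWC k).lift v u (by rw [h1]; exact hadj)
    have hymem : y ∈ insert v (hGlf v).toFinset := by
      refine Finset.mem_insert_of_mem ?_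
      rw [Set.Finite.mem_toFinset]
      exact hy1
    exact ⟨y, hy1, by rw [← hk y hymem, hy2]⟩
  have hΦinj : Function.Injective Φ := by
    intro v v' heq
    by_contra hne
    have hm : {k : ℕ | 2 * G.dist s v + G.dist v v' ≤ k} ∈ F := by
      exact Nat.hyperfilter_le_atTop (Filter.mem_atTop _)
    have hAk := Filter.inter_mem (Filter.inter_mem (hagree {v, v'}) hE₀) hm
    obtain ⟨k, ⟨hk1, hk2⟩, hk3⟩ := Filter.nonempty_of_mem hAk
    have h1 : πn k v = Φ v := hk1 v (by simp)
    have h2 : πn k v' = Φ v' := hk1 v' (by simp)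
    have := hkey k hk2 v v' hne (by rw [h1, h2, heq])
    simp only [Set.mem_setOf_eq] at hk3
    omega
  have hΦsurj : Function.Surjective Φ := by
    have hstep : ∀ {w w' : W} (p : H.Walk w w'), (∃ v, Φ v = w) → ∃ v', Φ v' = w' := by
      intro w w' p
      induction p with
      | nil => exact id
      | @cons a' b' c' hadj q ih =>
        rintro ⟨v, rfl⟩
        obtain ⟨y, _, hy⟩ := hΦlift v b' hadj
        exact ih ⟨y, hy⟩
    intro w
    exact hstep ((hHconn.preconnected (Φ s) w).some) ⟨s, rfl⟩
  set σ : G ≃g H :=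
    { toEquiv := Equiv.ofBijective Φ ⟨hΦinj, hΦsurj⟩
      map_rel_iff' := by
        intro v v'
        show H.Adj (Φ v) (Φ v') ↔ G.Adj v v'
        constructor
        · intro hadj
          obtain ⟨y, hy1, hy2⟩ := hΦlift v (Φ v') hadj
          exact (hΦinj hy2) ▸ hy1
        · intro hadj
          have hd : G.dist v v' = 1 := SimpleGraph.dist_eq_one_iff_adj.mpr hadj
          have hle : H.dist (Φ v) (Φ v') ≤ 1 := hd ▸ hΦlip v v'
          have hpos : 0 < H.dist (Φ v) (Φ v') :=
            hHconn.pos_dist_of_ne (fun hcon => hadj.ne (hΦinj hcon))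
          exact SimpleGraph.dist_eq_one_iff_adj.mp (by omega) } with hσdef
  have hlamwc : IsWeakCover H H (fun w => π (σ.symm w)) := wc_comp (iso_wc σ.symm) hπ
  have hlaminj := selfcover_injective hHconn hHlf ⟨SH, hSHf, hSHall⟩ _ hlamwc
  have hσab : σ a ≠ σ b := fun hcon => hneab (σ.injective hcon)
  apply hσab
  apply hlaminj
  show π (σ.symm (σ a)) = π (σ.symm (σ b))
  rw [σ.symm_apply_apply, σ.symm_apply_apply, hab]


end Percolation
end

section
/- Let G and H be graphs and let π : V(G) → V(H) be a weak covering map. Then π can lift trees: for every subtree T of H and every vertex x ∈ V(G) with π(x) ∈ V(T), there is a lift of T that contains x. -/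
open MeasureTheory

namespace Percolation

variable {V : Type*} {W : Type*}

section TreeLift

open SimpleGraph

variable {V W : Type*} {G : SimpleGraph V} {H : SimpleGraph W} {π : V → W}
  {T : H.Subgraph} {x : V}

/-- The root of the lifted tree. -/
def tlRoot (hr : π x ∈ T.verts) : T.verts := ⟨π x, hr⟩

/-- Depth of a vertex of `T` relative to the root. -/
noncomputable def tlDepth (hr : π x ∈ T.verts) (u : T.verts) : ℕ :=
  T.coe.dist (tlRoot hr) u

lemma tl_split {r p u : T.verts} (w : T.coe.Walk r p) (hu : u ∈ w.support) :
    T.coe.dist r u + T.coe.dist u p ≤ w.length := by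
  classical
  have hsplit := w.take_spec hu
  have h1 : T.coe.dist r u ≤ (w.takeUntil u hu).length := dist_le _
  have h2 : T.coe.dist u p ≤ (w.dropUntil u hu).length := dist_le _
  have h3 : (w.takeUntil u hu).length + (w.dropUntil u hu).length = w.length := by
    rw [← SimpleGraph.Walk.length_append, hsplit]
  omega

lemma tl_exists_parent (hT : T.coe.IsTree) (hr : π x ∈ T.verts) (u : T.verts)
    (h : tlDepth hr u ≠ 0) :
    ∃ p : T.verts, T.coe.Adj p u ∧ tlDepth hr p + 1 = tlDepth hr u := by
  obtain ⟨w, hw⟩ := hT.isConnected.exists_walk_length_eq_dist (tlRoot hr) u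
  have hne : u ≠ tlRoot hr := by
    rintro rfl; exact h (SimpleGraph.dist_self)
  obtain ⟨a, hadj, w', hdec⟩ := SimpleGraph.Walk.exists_eq_cons_of_ne hne w.reverse
  refine ⟨a, hadj.symm, ?_⟩
  have hlen : w'.length + 1 = tlDepth hr u := by
    have := congrArg SimpleGraph.Walk.length hdec
    simpa [hw, tlDepth] using this.symm
  have h1 : T.coe.dist (tlRoot hr) a ≤ w'.length := by
    simpa using dist_le w'.reverse
  have h2 : tlDepth hr u ≤ tlDepth hr a + 1 := by
    have htr := hT.isConnected.dist_triangle (u := tlRoot hr) (v := a) (w := u)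
    have : T.coe.dist a u ≤ 1 := by
      simpa using dist_le (SimpleGraph.Walk.cons hadj.symm SimpleGraph.Walk.nil)
    simpa [tlDepth] using htr.trans (by omega)
  have h2' : tlDepth hr a ≤ w'.length := h1
  simp only [tlDepth] at *
  omega

/-- The parent of a non-root vertex. -/
noncomputable def tlParent (hT : T.coe.IsTree) (hr : π x ∈ T.verts) (u : T.verts)
    (h : tlDepth hr u ≠ 0) : T.verts :=
  (tl_exists_parent hT hr u h).choose

lemma tlParent_adj (hT : T.coe.IsTree) (hr : π x ∈ T.verts) (u : T.verts)
    (h : tlDepth hr u ≠ 0) : T.coe.Adj (tlParent hT hr u h) u :=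
  (tl_exists_parent hT hr u h).choose_spec.1

lemma tlParent_depth (hT : T.coe.IsTree) (hr : π x ∈ T.verts) (u : T.verts)
    (h : tlDepth hr u ≠ 0) : tlDepth hr (tlParent hT hr u h) + 1 = tlDepth hr u :=
  (tl_exists_parent hT hr u h).choose_spec.2

/-- A path from `u` down to the root obtained from a shortest walk. -/
lemma tl_path (hT : T.coe.IsTree) (hr : π x ∈ T.verts) (u : T.verts) :
    ∃ P : T.coe.Walk u (tlRoot hr), P.IsPath ∧ P.length = tlDepth hr u ∧
      ∀ z, z ∈ P.support → T.coe.dist (tlRoot hr) z + T.coe.dist z u ≤ tlDepth hr u := by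
  classical
  obtain ⟨w, hw⟩ := hT.isConnected.exists_walk_length_eq_dist (tlRoot hr) u
  refine ⟨w.bypass.reverse, w.bypass_isPath.reverse, ?_, ?_⟩
  · have h1 : w.bypass.length ≤ w.length := SimpleGraph.Walk.length_bypass_le w
    have h2 : tlDepth hr u ≤ w.bypass.length := dist_le _
    have := hw
    simp only [SimpleGraph.Walk.length_reverse]
    simp only [tlDepth] at *
    omega
  · intro z hz
    have hz' : z ∈ w.support := SimpleGraph.Walk.support_bypass_subset w
      (by simpa using hz)
    have := tl_split w hz'
    simpa [hw, tlDepth] using this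

lemma tl_parent_unique (hT : T.coe.IsTree) (hr : π x ∈ T.verts) {u p : T.verts}
    (hadj : T.coe.Adj p u) (hd : tlDepth hr p + 1 = tlDepth hr u)
    (h : tlDepth hr u ≠ 0) : p = tlParent hT hr u h := by
  have hqadj := tlParent_adj hT hr u h
  have hqd := tlParent_depth hT hr u h
  obtain ⟨Pp, hPp, hPpl, hPps⟩ := tl_path hT hr p
  obtain ⟨Pq, hPq, hPql, hPqs⟩ := tl_path hT hr (tlParent hT hr u h)
  have hup : u ∉ Pp.support := by
    intro hu
    have h1 := hPps u hu
    have h2 : T.coe.dist (tlRoot hr) u ≠ 0 := h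
    simp only [tlDepth] at h1 hd
    omega
  have huq : u ∉ Pq.support := by
    intro hu
    have h1 := hPqs u hu
    have h2 : T.coe.dist (tlRoot hr) u ≠ 0 := h
    simp only [tlDepth] at h1 hqd
    omega
  have hWp : (SimpleGraph.Walk.cons hadj.symm Pp).IsPath :=
    (SimpleGraph.Walk.cons_isPath_iff _ _).2 ⟨hPp, hup⟩
  have hWq : (SimpleGraph.Walk.cons hqadj.symm Pq).IsPath :=
    (SimpleGraph.Walk.cons_isPath_iff _ _).2 ⟨hPq, huq⟩
  have heq := (hT.existsUnique_path u (tlRoot hr)).unique hWp hWq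
  have := congrArg (fun w => SimpleGraph.Walk.getVert w 1) heq
  simpa [SimpleGraph.Walk.getVert_cons_succ] using this

lemma tl_depth_ne (hT : T.coe.IsTree) (hr : π x ∈ T.verts) {u v : T.verts}
    (hadj : T.coe.Adj u v) : tlDepth hr u ≠ tlDepth hr v := by
  intro hne
  obtain ⟨Pu, hPu, hPul, hPus⟩ := tl_path hT hr u
  obtain ⟨Pv, hPv, hPvl, hPvs⟩ := tl_path hT hr v
  have huv : u ∉ Pv.support := by
    intro hu
    have h1 := hPvs u hu
    have h2 : 0 < T.coe.dist u v :=
      hT.isConnected.pos_dist_of_ne hadj.ne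
    simp only [tlDepth] at *
    omega
  have hW : (SimpleGraph.Walk.cons hadj Pv).IsPath :=
    (SimpleGraph.Walk.cons_isPath_iff _ _).2 ⟨hPv, huv⟩
  have heq := (hT.existsUnique_path u (tlRoot hr)).unique hW hPu
  have := congrArg SimpleGraph.Walk.length heq
  simp only [SimpleGraph.Walk.length_cons, hPvl, hPul] at this
  omega

/-- The recursive lift of the vertices of `T` to `G`. -/
noncomputable def tlLift (hπ : IsWeakCover G H π) (hT : T.coe.IsTree)
    (hr : π x ∈ T.verts) (u : T.verts) : {y : V // π y = ↑u} :=
  if h : tlDepth hr u = 0 then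
    ⟨x, by
      have : tlRoot hr = u := (hT.isConnected.dist_eq_zero_iff).mp h
      rw [← this]; rfl⟩
  else
    let yp := tlLift hπ hT hr (tlParent hT hr u h)
    have hadjH : H.Adj (π ↑yp) ↑u := by
      rw [yp.2]
      exact T.adj_sub (tlParent_adj hT hr u h)
    ⟨(hπ.lift ↑yp ↑u hadjH).choose, (hπ.lift ↑yp ↑u hadjH).choose_spec.2⟩
termination_by tlDepth hr u
decreasing_by
  have := tlParent_depth hT hr u h
  omega

lemma tlLift_root (hπ : IsWeakCover G H π) (hT : T.coe.IsTree) (hr : π x ∈ T.verts)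
    {u : T.verts} (h : tlDepth hr u = 0) : (tlLift hπ hT hr u : V) = x := by
  rw [tlLift]
  simp [h]

lemma tlLift_adj (hπ : IsWeakCover G H π) (hT : T.coe.IsTree) (hr : π x ∈ T.verts)
    {u : T.verts} (h : tlDepth hr u ≠ 0) :
    G.Adj (tlLift hπ hT hr (tlParent hT hr u h)) (tlLift hπ hT hr u) := by
  conv_rhs => rw [tlLift]
  simp only [h, dif_neg, not_false_iff]
  have hadjH : H.Adj (π ↑(tlLift hπ hT hr (tlParent hT hr u h))) ↑u := by
    rw [(tlLift hπ hT hr (tlParent hT hr u h)).2]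
    exact T.adj_sub (tlParent_adj hT hr u h)
  exact (hπ.lift ↑(tlLift hπ hT hr (tlParent hT hr u h)) ↑u hadjH).choose_spec.1

/-- Adjacent vertices of `T` are mapped to adjacent vertices of `G`. -/
lemma tlLift_adj_of_adj (hπ : IsWeakCover G H π) (hT : T.coe.IsTree) (hr : π x ∈ T.verts)
    {u v : T.verts} (hadj : T.coe.Adj u v) :
    G.Adj (tlLift hπ hT hr u) (tlLift hπ hT hr v) := by
  have hne := tl_depth_ne hT hr hadj
  have h1 : tlDepth hr u ≤ tlDepth hr v + 1 := by
    have htr := hT.isConnected.dist_triangle (u := tlRoot hr) (v := v) (w := u)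
    have : T.coe.dist v u ≤ 1 :=
      SimpleGraph.dist_le (SimpleGraph.Walk.cons hadj.symm SimpleGraph.Walk.nil)
    simpa [tlDepth] using htr.trans (by omega)
  have h2 : tlDepth hr v ≤ tlDepth hr u + 1 := by
    have htr := hT.isConnected.dist_triangle (u := tlRoot hr) (v := u) (w := v)
    have : T.coe.dist u v ≤ 1 :=
      SimpleGraph.dist_le (SimpleGraph.Walk.cons hadj SimpleGraph.Walk.nil)
    simpa [tlDepth] using htr.trans (by omega)
  rcases lt_or_gt_of_ne hne with hlt | hgt
  · -- depth u + 1 = depth v, so u is the parent of v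
    have hv : tlDepth hr v ≠ 0 := by omega
    have hu : u = tlParent hT hr v hv := tl_parent_unique hT hr hadj (by omega) hv
    rw [hu]
    exact tlLift_adj hπ hT hr hv
  · have hu : tlDepth hr u ≠ 0 := by omega
    have hv : v = tlParent hT hr u hu := tl_parent_unique hT hr hadj.symm (by omega) hu
    rw [hv]
    exact (tlLift_adj hπ hT hr hu).symm

/-- The lifted subtree, as a subgraph of `G`. -/
noncomputable def tlSub (hπ : IsWeakCover G H π) (hT : T.coe.IsTree)
    (hr : π x ∈ T.verts) : G.Subgraph where
  verts := Set.range (fun u : T.verts => (tlLift hπ hT hr u : V))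
  Adj a b := G.Adj a b ∧ ∃ u v : T.verts, T.coe.Adj u v ∧
    a = (tlLift hπ hT hr u : V) ∧ b = (tlLift hπ hT hr v : V)
  adj_sub h := h.1
  edge_vert := by
    rintro a b ⟨hg, u, v, huv, rfl, rfl⟩
    exact ⟨u, rfl⟩
  symm := by
    constructor
    rintro a b ⟨hg, u, v, huv, rfl, rfl⟩
    exact ⟨hg.symm, v, u, huv.symm, rfl, rfl⟩

lemma tl_x_mem (hπ : IsWeakCover G H π) (hT : T.coe.IsTree) (hr : π x ∈ T.verts) :
    x ∈ (tlSub hπ hT hr).verts :=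
  ⟨tlRoot hr, tlLift_root hπ hT hr (by simp [tlDepth])⟩

lemma tl_reach (hπ : IsWeakCover G H π) (hT : T.coe.IsTree) (hr : π x ∈ T.verts)
    (u : T.verts) :
    (tlSub hπ hT hr).coe.Reachable ⟨(tlLift hπ hT hr u : V), ⟨u, rfl⟩⟩
      ⟨x, tl_x_mem hπ hT hr⟩ := by
  suffices hsuf : ∀ n (u : T.verts), tlDepth hr u = n →
      (tlSub hπ hT hr).coe.Reachable ⟨(tlLift hπ hT hr u : V), ⟨u, rfl⟩⟩
        ⟨x, tl_x_mem hπ hT hr⟩ from hsuf _ u rfl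
  intro n
  induction n using Nat.strong_induction_on with
  | _ n ih =>
    intro u hu
    by_cases h0 : tlDepth hr u = 0
    · have he : (⟨(tlLift hπ hT hr u : V), ⟨u, rfl⟩⟩ : (tlSub hπ hT hr).verts)
          = ⟨x, tl_x_mem hπ hT hr⟩ := Subtype.ext (tlLift_root hπ hT hr h0)
      rw [he]
    · have hadj : (tlSub hπ hT hr).coe.Adj ⟨(tlLift hπ hT hr u : V), ⟨u, rfl⟩⟩
          ⟨(tlLift hπ hT hr (tlParent hT hr u h0) : V), ⟨tlParent hT hr u h0, rfl⟩⟩ :=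
        ⟨(tlLift_adj hπ hT hr h0).symm, u, tlParent hT hr u h0,
          (tlParent_adj hT hr u h0).symm, rfl, rfl⟩
      have hd := tlParent_depth hT hr u h0
      exact hadj.reachable.trans (ih (tlDepth hr (tlParent hT hr u h0))
        (by omega) (tlParent hT hr u h0) rfl)

/-- The projection, as a graph homomorphism from the lifted subtree to `T`. -/
noncomputable def tlHom (hπ : IsWeakCover G H π) (hT : T.coe.IsTree)
    (hr : π x ∈ T.verts) : (tlSub hπ hT hr).coe →g T.coe where
  toFun a := ⟨π ↑a, by
    obtain ⟨u, hu⟩ := a.2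
    rw [← hu, (tlLift hπ hT hr u).2]
    exact u.2⟩
  map_rel' := by
    rintro ⟨a, ha⟩ ⟨b, hb⟩ ⟨hg, u, v, huv, h1, h2⟩
    show T.Adj (π a) (π b)
    subst h1; subst h2
    rw [(tlLift hπ hT hr u).2, (tlLift hπ hT hr v).2]
    exact huv

lemma tlHom_injective (hπ : IsWeakCover G H π) (hT : T.coe.IsTree)
    (hr : π x ∈ T.verts) : Function.Injective (tlHom hπ hT hr) := by
  rintro ⟨a, ha⟩ ⟨b, hb⟩ h
  obtain ⟨u, rfl⟩ := ha
  obtain ⟨v, rfl⟩ := hb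
  have h' : π (tlLift hπ hT hr u : V) = π (tlLift hπ hT hr v : V) :=
    congrArg Subtype.val h
  rw [(tlLift hπ hT hr u).2, (tlLift hπ hT hr v).2] at h'
  have : u = v := Subtype.ext h'
  subst this
  rfl

lemma tlSub_isTree (hπ : IsWeakCover G H π) (hT : T.coe.IsTree)
    (hr : π x ∈ T.verts) : (tlSub hπ hT hr).coe.IsTree := by
  constructor
  · have : Nonempty ((tlSub hπ hT hr).verts) := ⟨⟨x, tl_x_mem hπ hT hr⟩⟩
    refine ⟨?_⟩
    rintro ⟨a, u, rfl⟩ ⟨b, v, rfl⟩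
    exact (tl_reach hπ hT hr u).trans (tl_reach hπ hT hr v).symm
  · intro a c hc
    exact hT.2 _ ((SimpleGraph.Walk.map_isCycle_iff_of_injective
      (tlHom_injective hπ hT hr)).mpr hc)

end TreeLift

/-- **Lemma (weak covering maps lift trees).**
If `π` is a weak covering map, then for every subtree `T` of `H` and every vertex `x`
of `G` with `π x ∈ V(T)`, there is a lift of `T` containing `x`. -/
theorem weakCover_lifts_trees {V W : Type*} (G : SimpleGraph V) (H : SimpleGraph W)
    (hGconn : G.Connected) (hHconn : H.Connected)
    (hGlf : LocallyFinite' G) (hHlf : LocallyFinite' H)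
    (π : V → W) (hπ : IsWeakCover G H π) :
    ∀ T : H.Subgraph, T.coe.IsTree → ∀ x : V, π x ∈ T.verts →
      ∃ T' : G.Subgraph, IsLift G H π T T' ∧ x ∈ T'.verts := by
  intro T hT x hr
  refine ⟨tlSub hπ hT hr, ⟨tlSub_isTree hπ hT hr, ⟨?_, ?_, ?_⟩, ?_⟩, tl_x_mem hπ hT hr⟩
  · -- MapsTo
    rintro a ⟨u, rfl⟩
    rw [(tlLift hπ hT hr u).2]
    exact u.2
  · -- InjOn
    rintro a ⟨u, rfl⟩ b ⟨v, rfl⟩ h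
    rw [(tlLift hπ hT hr u).2, (tlLift hπ hT hr v).2] at h
    rw [Subtype.ext h]
  · -- SurjOn
    intro w hw
    exact ⟨(tlLift hπ hT hr ⟨w, hw⟩ : V), ⟨⟨w, hw⟩, rfl⟩, (tlLift hπ hT hr ⟨w, hw⟩).2⟩
  · -- adjacency
    intro a b ha hb
    constructor
    · rintro ⟨hg, u, v, huv, rfl, rfl⟩
      rw [(tlLift hπ hT hr u).2, (tlLift hπ hT hr v).2]
      exact huv
    · obtain ⟨u, rfl⟩ := ha
      obtain ⟨v, rfl⟩ := hb
      intro hadj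
      rw [(tlLift hπ hT hr u).2, (tlLift hπ hT hr v).2] at hadj
      have hcoe : T.coe.Adj u v := hadj
      exact ⟨tlLift_adj_of_adj hπ hT hr hcoe, u, v, hcoe, rfl, rfl⟩


end Percolation
end

section
/- Let G and H be graphs and let π : V(G) → V(H) be a weak covering map. Then for every p ∈ [0,1] and any two finite subsets A, B ⊆ V(H), one has P_p[π⁻¹(A) ↔ π⁻¹(B)] ≥ P_p[A ↔ B], where the left-hand probability is for Bernoulli bond percolation of parameter p on G and the right-hand one for Bernoulli bond percolation of parameter p on H. -/
open MeasureTheory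

namespace Percolation

variable {V : Type*} {W : Type*}

section AuxWeakCover

open SimpleGraph

attribute [local instance] Classical.propDecidable

variable {V : Type*} {W : Type*} {G : SimpleGraph V} {H : SimpleGraph W} {π : V → W}

lemma IsWeakCover.surjective (hπ : IsWeakCover G H π) (hV : Nonempty V)
    (hH : H.Connected) : Function.Surjective π := by
  intro w
  obtain ⟨x₀⟩ := hV
  obtain ⟨pw⟩ : H.Reachable (π x₀) w := hH (π x₀) w
  suffices h : ∀ (u v : W) (_ : H.Walk u v) (x : V), π x = u → ∃ y, π y = v from
    h _ _ pw x₀ rfl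
  intro u v q
  induction q with
  | nil => exact fun x hx => ⟨x, hx⟩
  | cons h q ih =>
      intro x hx
      obtain ⟨y, _, hy⟩ := hπ.lift x _ (by rwa [hx])
      exact ih y hy

lemma exists_lift_edge (hπ : IsWeakCover G H π) (σ : W → V) (hσ : ∀ w, π (σ w) = w)
    (f : H.edgeSet) : ∃ e : G.edgeSet, Sym2.map π (e : Sym2 V) = (f : Sym2 W) := by
  obtain ⟨⟨u, v⟩, hrep⟩ := (f : Sym2 W).exists_rep
  have hrep' : s(u, v) = (f : Sym2 W) := hrep
  have hadj : H.Adj u v := by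
    have : s(u, v) ∈ H.edgeSet := by rw [hrep']; exact f.2
    exact this
  obtain ⟨y, hxy, hy⟩ := hπ.lift (σ u) v (by rwa [hσ])
  refine ⟨⟨s(σ u, y), hxy⟩, ?_⟩
  simp only [Sym2.map_pair_eq, hσ, hy, ← hrep']

/-- State of the exploration. -/
structure ExSt {V : Type*} {W : Type*} (G : SimpleGraph V) (H : SimpleGraph W)
    (F : Finset H.edgeSet) where
  R : Finset {f : H.edgeSet // f ∈ F}
  m : {f : H.edgeSet // f ∈ F} → G.edgeSet
  C : Set W
  X : W → V

variable {F : Finset H.edgeSet}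

/-- There is an unexplored edge of `F` with an endpoint in the current cluster. -/
def AvailP (hπ : IsWeakCover G H π) (S : ExSt G H F) : Prop :=
  ∃ t : {f : H.edgeSet // f ∈ F} × W × W,
    t.1 ∉ S.R ∧ ((t.1 : H.edgeSet) : Sym2 W) = s(t.2.1, t.2.2) ∧ t.2.1 ∈ S.C ∧
      H.Adj (π (S.X t.2.1)) t.2.2

noncomputable def pickF {hπ : IsWeakCover G H π} {S : ExSt G H F} (h : AvailP hπ S) :
    {f : H.edgeSet // f ∈ F} := h.choose.1

noncomputable def pickU {hπ : IsWeakCover G H π} {S : ExSt G H F} (h : AvailP hπ S) : W :=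
  h.choose.2.1

noncomputable def pickV {hπ : IsWeakCover G H π} {S : ExSt G H F} (h : AvailP hπ S) : W :=
  h.choose.2.2

lemma pick_spec {hπ : IsWeakCover G H π} {S : ExSt G H F} (h : AvailP hπ S) :
    pickF h ∉ S.R ∧ ((pickF h : H.edgeSet) : Sym2 W) = s(pickU h, pickV h) ∧
      pickU h ∈ S.C ∧ H.Adj (π (S.X (pickU h))) (pickV h) := h.choose_spec

noncomputable def pickY {hπ : IsWeakCover G H π} {S : ExSt G H F} (h : AvailP hπ S) : V :=
  (hπ.lift (S.X (pickU h)) (pickV h) (pick_spec h).2.2.2).choose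

lemma pickY_spec {hπ : IsWeakCover G H π} {S : ExSt G H F} (h : AvailP hπ S) :
    G.Adj (S.X (pickU h)) (pickY h) ∧ π (pickY h) = pickV h :=
  (hπ.lift (S.X (pickU h)) (pickV h) (pick_spec h).2.2.2).choose_spec

noncomputable def pickE {hπ : IsWeakCover G H π} {S : ExSt G H F} (h : AvailP hπ S) :
    G.edgeSet := ⟨s(S.X (pickU h), pickY h), (pickY_spec h).1⟩

/-- One step of the exploration. -/
noncomputable def stepEx (hπ : IsWeakCover G H π)
    (η : {f : H.edgeSet // f ∈ F} → Bool) (S : ExSt G H F) : ExSt G H F :=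
  if h : AvailP hπ S then
    { R := insert (pickF h) S.R
      m := Function.update S.m (pickF h) (pickE h)
      C := if η (pickF h) = true then insert (pickV h) S.C else S.C
      X := if η (pickF h) = true then Function.update S.X (pickV h) (pickY h) else S.X }
  else S

lemma stepEx_pos {hπ : IsWeakCover G H π} {η} {S : ExSt G H F} (h : AvailP hπ S) :
    stepEx hπ η S =
      { R := insert (pickF h) S.R
        m := Function.update S.m (pickF h) (pickE h)
        C := if η (pickF h) = true then insert (pickV h) S.C else S.C
        X := if η (pickF h) = true then Function.update S.X (pickV h) (pickY h) else S.X } :=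
  dif_pos h

lemma stepEx_neg {hπ : IsWeakCover G H π} {η} {S : ExSt G H F} (h : ¬ AvailP hπ S) :
    stepEx hπ η S = S := dif_neg h

/-- The exploration run. -/
noncomputable def runEx (hπ : IsWeakCover G H π) (σ : W → V) (hσ : ∀ w, π (σ w) = w)
    (A : Set W) (η : {f : H.edgeSet // f ∈ F} → Bool) : ℕ → ExSt G H F
  | 0 => { R := ∅, m := fun f => (exists_lift_edge hπ σ hσ f.1).choose, C := A, X := σ }
  | (k + 1) => stepEx hπ η (runEx hπ σ hσ A η k)

section RunLemmas

variable {hπ : IsWeakCover G H π} {σ : W → V} {hσ : ∀ w, π (σ w) = w}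
  {A : Set W} {η η' : {f : H.edgeSet // f ∈ F} → Bool}

lemma runEx_R_mono_succ (k : ℕ) :
    (runEx hπ σ hσ A η k).R ⊆ (runEx hπ σ hσ A η (k + 1)).R := by
  show (runEx hπ σ hσ A η k).R ⊆ (stepEx hπ η _).R
  by_cases h : AvailP hπ (runEx hπ σ hσ A η k)
  · rw [stepEx_pos h]; exact Finset.subset_insert _ _
  · rw [stepEx_neg h]

lemma runEx_R_mono {k l : ℕ} (hkl : k ≤ l) :
    (runEx hπ σ hσ A η k).R ⊆ (runEx hπ σ hσ A η l).R := by
  induction l with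
  | zero => simp_all
  | succ l ih =>
      rcases Nat.lt_or_ge k (l + 1) with h | h
      · exact (ih (Nat.lt_succ_iff.mp h)).trans (runEx_R_mono_succ l)
      · have : k = l + 1 := le_antisymm hkl h
        subst this; exact subset_rfl

lemma runEx_C_mono_succ (k : ℕ) :
    (runEx hπ σ hσ A η k).C ⊆ (runEx hπ σ hσ A η (k + 1)).C := by
  show (runEx hπ σ hσ A η k).C ⊆ (stepEx hπ η _).C
  by_cases h : AvailP hπ (runEx hπ σ hσ A η k)
  · rw [stepEx_pos h]
    by_cases hb : η (pickF h) = true <;> simp [hb, Set.subset_insert]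
  · rw [stepEx_neg h]

lemma runEx_C_mono {k l : ℕ} (hkl : k ≤ l) :
    (runEx hπ σ hσ A η k).C ⊆ (runEx hπ σ hσ A η l).C := by
  induction l with
  | zero => simp_all
  | succ l ih =>
      rcases Nat.lt_or_ge k (l + 1) with h | h
      · exact (ih (Nat.lt_succ_iff.mp h)).trans (runEx_C_mono_succ l)
      · have : k = l + 1 := le_antisymm hkl h
        subst this; exact subset_rfl

lemma runEx_m_stable_succ {k : ℕ} {f} (hf : f ∈ (runEx hπ σ hσ A η k).R) :
    (runEx hπ σ hσ A η (k + 1)).m f = (runEx hπ σ hσ A η k).m f := by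
  show (stepEx hπ η _).m f = _
  by_cases h : AvailP hπ (runEx hπ σ hσ A η k)
  · rw [stepEx_pos h]
    exact Function.update_of_ne (fun hc => (pick_spec h).1 (by rw [← hc]; exact hf)) _ _
  · rw [stepEx_neg h]

lemma runEx_m_stable {k l : ℕ} (hkl : k ≤ l) {f} (hf : f ∈ (runEx hπ σ hσ A η k).R) :
    (runEx hπ σ hσ A η l).m f = (runEx hπ σ hσ A η k).m f := by
  induction l with
  | zero => simp_all
  | succ l ih =>
      rcases Nat.lt_or_ge k (l + 1) with h | h
      · have h' := Nat.lt_succ_iff.mp h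
        rw [runEx_m_stable_succ (runEx_R_mono h' hf)]
        exact ih h'
      · have : k = l + 1 := le_antisymm hkl h
        subst this; rfl

lemma runEx_m_unexplored {k : ℕ} {f} (hf : f ∉ (runEx hπ σ hσ A η k).R) :
    (runEx hπ σ hσ A η k).m f = (runEx hπ σ hσ A η 0).m f := by
  induction k with
  | zero => rfl
  | succ k ih =>
      have hfk : f ∉ (runEx hπ σ hσ A η k).R := fun hc => hf (runEx_R_mono_succ k hc)
      rw [← ih hfk]
      show (stepEx hπ η _).m f = _
      by_cases h : AvailP hπ (runEx hπ σ hσ A η k)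
      · have hne : f ≠ pickF h := by
          intro hc
          have : f ∈ (runEx hπ σ hσ A η (k+1)).R := by
            show f ∈ (stepEx hπ η _).R
            rw [stepEx_pos h, hc]
            exact Finset.mem_insert_self _ _
          exact hf this
        rw [stepEx_pos h]
        exact Function.update_of_ne hne _ _
      · rw [stepEx_neg h]

/-- The section invariant: `π ∘ X = id` on the cluster. -/
lemma runEx_X_section (k : ℕ) : ∀ u ∈ (runEx hπ σ hσ A η k).C,
    π ((runEx hπ σ hσ A η k).X u) = u := by
  induction k with
  | zero => exact fun u _ => hσ u
  | succ k ih =>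
      show ∀ u ∈ (stepEx hπ η _).C, π ((stepEx hπ η _).X u) = u
      by_cases h : AvailP hπ (runEx hπ σ hσ A η k)
      · rw [stepEx_pos h]
        by_cases hb : η (pickF h) = true <;> simp only [hb, if_true, if_false, if_neg]
        · intro u hu
          rcases Set.mem_insert_iff.mp hu with rfl | hu
          · rw [Function.update_self]; exact (pickY_spec h).2
          · by_cases huv : u = pickV h
            · subst huv; rw [Function.update_self]; exact (pickY_spec h).2
            · rw [Function.update_of_ne huv]; exact ih u hu
        · exact ih
      · rw [stepEx_neg h]; exact ih

/-- The projection invariant: `m f` always lifts `f`. -/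
lemma runEx_m_proj (k : ℕ) : ∀ f,
    Sym2.map π (((runEx hπ σ hσ A η k).m f : G.edgeSet) : Sym2 V) = ((f : H.edgeSet) : Sym2 W) := by
  induction k with
  | zero => exact fun f => (exists_lift_edge hπ σ hσ f.1).choose_spec
  | succ k ih =>
      show ∀ f, Sym2.map π (((stepEx hπ η _).m f : G.edgeSet) : Sym2 V) = _
      by_cases h : AvailP hπ (runEx hπ σ hσ A η k)
      · rw [stepEx_pos h]
        intro f
        dsimp only
        by_cases hf : f = pickF h
        · subst hf
          rw [Function.update_self]
          show Sym2.map π s((runEx hπ σ hσ A η k).X (pickU h), pickY h) = _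
          rw [Sym2.map_pair_eq, runEx_X_section k _ (pick_spec h).2.2.1, (pickY_spec h).2,
            (pick_spec h).2.1]
        · rw [Function.update_of_ne hf]; exact ih f
      · rw [stepEx_neg h]; exact ih

/-- Closure invariant: endpoints of explored open edges are in the cluster. -/
lemma runEx_closure (k : ℕ) : ∀ f ∈ (runEx hπ σ hσ A η k).R, η f = true →
    ∀ z ∈ ((f : H.edgeSet) : Sym2 W), z ∈ (runEx hπ σ hσ A η k).C := by
  induction k with
  | zero => intro f hf; exact absurd hf (Finset.notMem_empty _)
  | succ k ih =>
      show ∀ f ∈ (stepEx hπ η _).R, _ → ∀ z ∈ _, z ∈ (stepEx hπ η _).C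
      by_cases h : AvailP hπ (runEx hπ σ hσ A η k)
      · rw [stepEx_pos h]
        intro f hf hη z hz
        rcases Finset.mem_insert.mp hf with rfl | hf
        · rw [(pick_spec h).2.1] at hz
          simp only [hη, if_true]
          rcases Sym2.mem_iff.mp hz with rfl | rfl
          · exact Set.mem_insert_iff.mpr (Or.inr (pick_spec h).2.2.1)
          · exact Set.mem_insert _ _
        · have := ih f hf hη z hz
          by_cases hb : η (pickF h) = true <;> simp only [hb, if_true, if_false, if_neg]
          · exact Set.mem_insert_iff.mpr (Or.inr this)
          · exact this
      · rw [stepEx_neg h]; exact ih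

end RunLemmas

section RunLemmas2

variable {hπ : IsWeakCover G H π} {σ : W → V} {hσ : ∀ w, π (σ w) = w}
  {A : Set W} {η η' : {f : H.edgeSet // f ∈ F} → Bool}

lemma pick_eq_of_state_eq {S S' : ExSt G H F} (hSS : S = S') (h : AvailP hπ S)
    (h' : AvailP hπ S') :
    pickF h = pickF h' ∧ pickU h = pickU h' ∧ pickV h = pickV h' ∧ pickY h = pickY h' ∧
      pickE h = pickE h' := by
  subst hSS; exact ⟨rfl, rfl, rfl, rfl, rfl⟩

lemma stepEx_congr {S : ExSt G H F}
    (hc : ∀ h : AvailP hπ S, η (pickF h) = η' (pickF h)) :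
    stepEx hπ η S = stepEx hπ η' S := by
  unfold stepEx
  by_cases h : AvailP hπ S
  · rw [dif_pos h, dif_pos h, hc h]
  · rw [dif_neg h, dif_neg h]

lemma runEx_stall {k : ℕ} (hna : ¬ AvailP hπ (runEx hπ σ hσ A η k)) :
    ∀ l, k ≤ l → runEx hπ σ hσ A η l = runEx hπ σ hσ A η k := by
  intro l hl
  induction l with
  | zero => cases Nat.le_zero.mp hl; rfl
  | succ l ih =>
      rcases Nat.lt_or_ge k (l + 1) with hlt | hge
      · have h' := ih (Nat.lt_succ_iff.mp hlt)
        show stepEx hπ η _ = _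
        rw [h', stepEx_neg hna]
      · cases le_antisymm hl hge; rfl

lemma runEx_done : ¬ AvailP hπ (runEx hπ σ hσ A η F.card) := by
  by_contra h
  have hav : ∀ k, k ≤ F.card → AvailP hπ (runEx hπ σ hσ A η k) := by
    intro k hk
    by_contra hn
    rw [runEx_stall hn F.card hk] at h
    exact hn h
  have hcard : ∀ k, k ≤ F.card → (runEx hπ σ hσ A η k).R.card = k := by
    intro k
    induction k with
    | zero => intro _; rfl
    | succ k ih =>
        intro hk
        have hk' : k ≤ F.card := Nat.le_of_succ_le hk
        have hA := hav k hk'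
        show (stepEx hπ η _).R.card = k + 1
        rw [stepEx_pos hA]
        show (insert (pickF hA) (runEx hπ σ hσ A η k).R).card = k + 1
        rw [Finset.card_insert_of_notMem (pick_spec hA).1, ih hk']
  have huniv : (runEx hπ σ hσ A η F.card).R = Finset.univ := by
    apply Finset.eq_univ_of_card
    rw [hcard F.card le_rfl, Fintype.card_coe]
  exact (pick_spec h).1 (huniv ▸ Finset.mem_univ _)

lemma runEx_avail_lt {k : ℕ} (h : AvailP hπ (runEx hπ σ hσ A η k)) : k < F.card := by
  by_contra hge
  rw [runEx_stall runEx_done k (Nat.le_of_not_lt hge)] at h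
  · exact runEx_done h

lemma runEx_m_final {k : ℕ} (h : AvailP hπ (runEx hπ σ hσ A η k)) :
    (runEx hπ σ hσ A η F.card).m (pickF h) = pickE h := by
  have hk : k < F.card := runEx_avail_lt h
  have hmem : pickF h ∈ (runEx hπ σ hσ A η (k + 1)).R := by
    show pickF h ∈ (stepEx hπ η _).R
    rw [stepEx_pos h]
    exact Finset.mem_insert_self _ _
  rw [runEx_m_stable hk hmem]
  show (stepEx hπ η _).m (pickF h) = pickE h
  rw [stepEx_pos h]
  exact Function.update_self _ _ _

lemma runEx_det (ω : G.edgeSet → Bool)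
    (hη : ∀ f, ω ((runEx hπ σ hσ A η F.card).m f) = η f)
    (hη' : ∀ f, ω ((runEx hπ σ hσ A η' F.card).m f) = η' f) : η = η' := by
  have main : ∀ k, runEx hπ σ hσ A η' k = runEx hπ σ hσ A η k ∧
      ∀ f ∈ (runEx hπ σ hσ A η k).R, η f = η' f := by
    intro k
    induction k with
    | zero => exact ⟨rfl, fun f hf => absurd hf (Finset.notMem_empty _)⟩
    | succ k ih =>
        obtain ⟨he, hR⟩ := ih
        by_cases h : AvailP hπ (runEx hπ σ hσ A η k)
        · have h' : AvailP hπ (runEx hπ σ hσ A η' k) := by rw [he]; exact h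
          obtain ⟨hpf, -, -, -, hpe⟩ := pick_eq_of_state_eq he h' h
          have hkey : η (pickF h) = η' (pickF h) := by
            have h1 : η (pickF h) = ω (pickE h) := by
              rw [← hη (pickF h), runEx_m_final h]
            have h2 : η' (pickF h) = ω (pickE h) := by
              rw [← hpf, ← hpe, ← runEx_m_final h']
              exact (hη' (pickF h')).symm
            rw [h1, h2]
          have hstate : runEx hπ σ hσ A η' (k + 1) = runEx hπ σ hσ A η (k + 1) := by
            show stepEx hπ η' _ = stepEx hπ η _
            rw [he]
            exact (stepEx_congr (fun h₀ => hkey)).symm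
          refine ⟨hstate, ?_⟩
          intro f hf
          have : f ∈ insert (pickF h) (runEx hπ σ hσ A η k).R := by
            have := stepEx_pos (η := η) h
            rw [show runEx hπ σ hσ A η (k+1) = stepEx hπ η (runEx hπ σ hσ A η k) from rfl,
              this] at hf
            exact hf
          rcases Finset.mem_insert.mp this with rfl | hmem
          · exact hkey
          · exact hR f hmem
        · have h' : ¬ AvailP hπ (runEx hπ σ hσ A η' k) := by rw [he]; exact h
          have e1 : runEx hπ σ hσ A η (k + 1) = runEx hπ σ hσ A η k := stepEx_neg h
          have e2 : runEx hπ σ hσ A η' (k + 1) = runEx hπ σ hσ A η' k := stepEx_neg h'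
          rw [e1, e2, he]
          exact ⟨rfl, hR⟩
  funext f
  by_cases hf : f ∈ (runEx hπ σ hσ A η F.card).R
  · exact (main F.card).2 f hf
  · have hf' : f ∉ (runEx hπ σ hσ A η' F.card).R := by
      rw [(main F.card).1]; exact hf
    have e0 : runEx hπ σ hσ A η' 0 = runEx hπ σ hσ A η 0 := rfl
    rw [← hη f, ← hη' f, runEx_m_unexplored hf, runEx_m_unexplored hf', e0]

end RunLemmas2

/-- The set of `η`-open edges of `F`, as a set of unordered pairs. -/
def ESet (F : Finset H.edgeSet) (η : {f : H.edgeSet // f ∈ F} → Bool) : Set (Sym2 W) :=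
  {e | ∃ f : {f : H.edgeSet // f ∈ F}, ((f : H.edgeSet) : Sym2 W) = e ∧ η f = true}

/-- The pattern `η` on `F` connects `A` to `B`. -/
def GoodPat (A B : Set W) (F : Finset H.edgeSet)
    (η : {f : H.edgeSet // f ∈ F} → Bool) : Prop :=
  ∃ a ∈ A, ∃ b ∈ B, (SimpleGraph.fromEdgeSet (ESet F η)).Reachable a b

lemma reach_closed {H' : SimpleGraph W} {S : Set W}
    (hS : ∀ u v, H'.Adj u v → u ∈ S → v ∈ S) :
    ∀ {a b : W}, H'.Reachable a b → a ∈ S → b ∈ S := by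
  intro a b h
  obtain ⟨w⟩ := h
  induction w with
  | nil => exact id
  | cons hadj q ih => exact fun ha => ih (hS _ _ hadj ha)

section RunLemmas3

variable {hπ : IsWeakCover G H π} {σ : W → V} {hσ : ∀ w, π (σ w) = w}
  {A : Set W} {η : {f : H.edgeSet // f ∈ F} → Bool}

lemma runEx_reach (ω : G.edgeSet → Bool)
    (hω : ∀ f, ω ((runEx hπ σ hσ A η F.card).m f) = η f) (k : ℕ) :
    ∀ u ∈ (runEx hπ σ hσ A η k).C, ∃ x : V, π x ∈ A ∧
      (openGraph G ω).Reachable x ((runEx hπ σ hσ A η k).X u) := by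
  induction k with
  | zero => exact fun u hu => ⟨σ u, by rwa [hσ], by rfl⟩
  | succ k ih =>
      show ∀ u ∈ (stepEx hπ η _).C, ∃ x : V, π x ∈ A ∧
        (openGraph G ω).Reachable x ((stepEx hπ η _).X u)
      by_cases h : AvailP hπ (runEx hπ σ hσ A η k)
      · rw [stepEx_pos h]
        dsimp only
        by_cases hb : η (pickF h) = true
        · simp only [hb, if_true]
          intro u hu
          by_cases huv : u = pickV h
          · subst huv
            rw [Function.update_self]
            obtain ⟨x, hxA, hreach⟩ := ih (pickU h) (pick_spec h).2.2.1
            have hopen : ω (pickE h) = true := by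
              rw [← runEx_m_final h, hω (pickF h)]; exact hb
            have hadj : (openGraph G ω).Adj ((runEx hπ σ hσ A η k).X (pickU h)) (pickY h) :=
              ⟨(pickY_spec h).1, hopen⟩
            exact ⟨x, hxA, hreach.trans hadj.reachable⟩
          · rw [Function.update_of_ne huv]
            rcases Set.mem_insert_iff.mp hu with rfl | hu
            · exact absurd rfl huv
            · exact ih u hu
        · simp only [hb, if_false]
          exact ih
      · rw [stepEx_neg h]; exact ih

lemma runEx_good_conn (B : Set W) (ω : G.edgeSet → Bool)
    (hω : ∀ f, ω ((runEx hπ σ hσ A η F.card).m f) = η f)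
    (hgood : GoodPat A B F η) :
    ω ∈ connectedEvent G (π ⁻¹' A) (π ⁻¹' B) := by
  obtain ⟨a, ha, b, hb, hr⟩ := hgood
  have hclosed : ∀ u v, (SimpleGraph.fromEdgeSet (ESet F η)).Adj u v →
      u ∈ (runEx hπ σ hσ A η F.card).C → v ∈ (runEx hπ σ hσ A η F.card).C := by
    intro u v huv hu
    rw [SimpleGraph.fromEdgeSet_adj] at huv
    obtain ⟨⟨f, hf, hηf⟩, hne⟩ := huv
    by_cases hfR : f ∈ (runEx hπ σ hσ A η F.card).R
    · exact runEx_closure F.card f hfR hηf v (by rw [hf]; exact Sym2.mem_mk_right _ _)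
    · exfalso
      apply runEx_done (hπ := hπ) (σ := σ) (hσ := hσ) (A := A) (η := η)
      refine ⟨⟨f, u, v⟩, hfR, hf, hu, ?_⟩
      rw [runEx_X_section F.card u hu]
      have hadj : s(u, v) ∈ H.edgeSet := by rw [← hf]; exact f.1.2
      exact hadj
  have hbC : b ∈ (runEx hπ σ hσ A η F.card).C :=
    reach_closed hclosed hr (runEx_C_mono (Nat.zero_le F.card) ha)
  obtain ⟨x, hxA, hreach⟩ := runEx_reach ω hω F.card b hbC
  refine ⟨x, hxA, (runEx hπ σ hσ A η F.card).X b, ?_, hreach⟩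
  simp only [Set.mem_preimage]
  rw [runEx_X_section F.card b hbC]
  exact hb

end RunLemmas3

lemma measurable_cyl {ι : Type*} {n : Type*} [Countable n] (M : n → ι) (η : n → Bool) :
    MeasurableSet {ω : ι → Bool | ∀ j : n, ω (M j) = η j} := by
  have : {ω : ι → Bool | ∀ j : n, ω (M j) = η j} =
      ⋂ j : n, (fun ω : ι → Bool => ω (M j)) ⁻¹' {η j} := by
    ext ω; simp [Set.mem_iInter]
  rw [this]
  exact MeasurableSet.iInter fun j => (measurable_pi_apply (M j)) (by trivial)

lemma measure_cyl {ι : Type*} {p : ℝ} {μ : MeasureTheory.Measure (ι → Bool)}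
    (hμ : IsBernoulliProduct p μ) {n : Type*} [Fintype n] (M : n → ι)
    (hM : Function.Injective M) (η : n → Bool) :
    μ {ω | ∀ j : n, ω (M j) = η j} =
      ∏ j : n, ENNReal.ofReal (if η j then p else 1 - p) := by
  classical
  set t : Finset ι := Finset.univ.image M with ht
  set g : ι → Bool := fun i => if h : ∃ j, M j = i then η h.choose else false with hgdef
  have hg : ∀ j, g (M j) = η j := by
    intro j
    have hj : ∃ j', M j' = M j := ⟨j, rfl⟩
    simp only [hgdef, dif_pos hj]
    exact congrArg η (hM hj.choose_spec)
  have hset : {ω : ι → Bool | ∀ j : n, ω (M j) = η j} = {ω | ∀ i ∈ t, ω i = g i} := by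
    ext ω
    constructor
    · intro hω i hi
      obtain ⟨j, -, rfl⟩ := Finset.mem_image.mp hi
      rw [hg j]; exact hω j
    · intro hω j
      rw [← hg j]
      exact hω (M j) (Finset.mem_image.mpr ⟨j, Finset.mem_univ _, rfl⟩)
  rw [hset, hμ.2 t g, ht, Finset.prod_image (fun a _ b _ h => hM h)]
  exact Finset.prod_congr rfl fun j _ => by rw [hg j]

section KeyIneq

variable {hπ : IsWeakCover G H π}

lemma runEx_m_inj (hπ : IsWeakCover G H π) (σ : W → V) (hσ : ∀ w, π (σ w) = w)
    (A : Set W) (η : {f : H.edgeSet // f ∈ F} → Bool) (k : ℕ) :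
    Function.Injective ((runEx hπ σ hσ A η k).m) := by
  intro f1 f2 h
  have h1 := runEx_m_proj (hπ := hπ) (σ := σ) (hσ := hσ) (A := A) (η := η) k f1
  have h2 := runEx_m_proj (hπ := hπ) (σ := σ) (hσ := hσ) (A := A) (η := η) k f2
  rw [h] at h1
  exact Subtype.ext (Subtype.ext (h1 ▸ h2 ▸ rfl))

lemma key_ineq (hπ : IsWeakCover G H π) (σ : W → V) (hσ : ∀ w, π (σ w) = w)
    (A B : Set W) (F : Finset H.edgeSet) {p : ℝ}
    (μG : MeasureTheory.Measure (G.edgeSet → Bool))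
    (μH : MeasureTheory.Measure (H.edgeSet → Bool))
    (hBG : IsBernoulliProduct p μG) (hBH : IsBernoulliProduct p μH) :
    μH {ω | GoodPat A B F (fun f => ω f.1)} ≤
      μG (connectedEvent G (π ⁻¹' A) (π ⁻¹' B)) := by
  classical
  set goodF : Finset ({f : H.edgeSet // f ∈ F} → Bool) :=
    Finset.univ.filter (GoodPat A B F) with hgoodF
  have hgood_mem : ∀ η, η ∈ goodF ↔ GoodPat A B F η := by
    intro η; simp [hgoodF]
  -- the H-side event as a disjoint union of cylinders
  set cylH : ({f : H.edgeSet // f ∈ F} → Bool) → Set (H.edgeSet → Bool) :=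
    fun η => {ω | ∀ f : {f : H.edgeSet // f ∈ F}, ω f.1 = η f} with hcylH
  have hEv : {ω : H.edgeSet → Bool | GoodPat A B F (fun f => ω f.1)} =
      ⋃ η ∈ goodF, cylH η := by
    ext ω
    simp only [Set.mem_setOf_eq, Set.mem_iUnion]
    constructor
    · intro hg
      exact ⟨fun f => ω f.1, (hgood_mem _).mpr hg, fun f => rfl⟩
    · rintro ⟨η, hηg, hω⟩
      have : (fun f : {f : H.edgeSet // f ∈ F} => ω f.1) = η := funext fun f => hω f
      rw [this]
      exact (hgood_mem _).mp hηg
  -- the G-side cylinders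
  set MM : ({f : H.edgeSet // f ∈ F} → Bool) → {f : H.edgeSet // f ∈ F} → G.edgeSet :=
    fun η => (runEx hπ σ hσ A η F.card).m with hMM
  set cylG : ({f : H.edgeSet // f ∈ F} → Bool) → Set (G.edgeSet → Bool) :=
    fun η => {ω | ∀ f : {f : H.edgeSet // f ∈ F}, ω (MM η f) = η f} with hcylG
  have hstep1 : μH {ω | GoodPat A B F (fun f => ω f.1)} =
      ∑ η ∈ goodF, μH (cylH η) := by
    rw [hEv]
    refine MeasureTheory.measure_biUnion_finset ?_ ?_
    · intro η _ η' _ hne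
      refine Set.disjoint_left.mpr fun ω hω hω' => hne ?_
      exact funext fun f => (hω f).symm.trans (hω' f)
    · intro η _
      exact measurable_cyl Subtype.val η
  have hstep2 : ∀ η, μH (cylH η) = μG (cylG η) := by
    intro η
    rw [hcylH, hcylG]
    rw [measure_cyl hBH Subtype.val Subtype.val_injective η,
      measure_cyl hBG (MM η) (runEx_m_inj hπ σ hσ A η F.card) η]
  have hstep3 : ∑ η ∈ goodF, μG (cylG η) = μG (⋃ η ∈ goodF, cylG η) := by
    refine (MeasureTheory.measure_biUnion_finset ?_ ?_).symm
    · intro η hη η' hη' hne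
      refine Set.disjoint_left.mpr fun ω hω hω' => hne ?_
      exact runEx_det ω hω hω'
    · intro η _
      exact measurable_cyl (MM η) η
  have hstep4 : (⋃ η ∈ goodF, cylG η) ⊆ connectedEvent G (π ⁻¹' A) (π ⁻¹' B) := by
    intro ω hω
    obtain ⟨η, hηg, hωη⟩ := Set.mem_iUnion₂.mp hω
    exact runEx_good_conn B ω hωη ((hgood_mem _).mp hηg)
  calc μH {ω | GoodPat A B F (fun f => ω f.1)}
      = ∑ η ∈ goodF, μH (cylH η) := hstep1
    _ = ∑ η ∈ goodF, μG (cylG η) := Finset.sum_congr rfl fun η _ => hstep2 η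
    _ = μG (⋃ η ∈ goodF, cylG η) := hstep3
    _ ≤ μG (connectedEvent G (π ⁻¹' A) (π ⁻¹' B)) := MeasureTheory.measure_mono hstep4

end KeyIneq

section Exhaustion

variable {A B : Set W}

lemma ballA_finite (hH : H.Connected) (hHlf : LocallyFinite' H) (hA : A.Finite) :
    ∀ n : ℕ, {z : W | ∃ a ∈ A, H.dist a z ≤ n}.Finite := by
  intro n
  induction n with
  | zero =>
      refine hA.subset ?_
      rintro z ⟨a, ha, hd⟩
      have h0 : H.dist a z = 0 := Nat.le_zero.mp hd
      rcases (SimpleGraph.dist_eq_zero_iff_eq_or_not_reachable.mp h0) with rfl | hnr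
      · exact ha
      · exact absurd (hH a z) hnr
  | succ n ih =>
      refine ((ih.union (Set.Finite.biUnion ih (fun y _ => hHlf y))).subset ?_)
      rintro z ⟨a, ha, hd⟩
      rcases Nat.lt_or_ge (H.dist a z) (n + 1) with hlt | hge
      · exact Or.inl ⟨a, ha, Nat.lt_succ_iff.mp hlt⟩
      · have heq : H.dist a z = n + 1 := le_antisymm hd hge
        obtain ⟨w, hw⟩ := (hH a z).exists_walk_length_eq_dist
        have hwr : (w.reverse).length = n + 1 := by rw [SimpleGraph.Walk.length_reverse, hw, heq]
        cases hwrev : w.reverse with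
        | nil => rw [hwrev] at hwr; simp at hwr
        | cons hadj q =>
            rename_i c
            rw [hwrev] at hwr
            simp only [SimpleGraph.Walk.length_cons] at hwr
            have hq : q.length = n := by omega
            have hcq : H.dist a c ≤ n := by
              rw [SimpleGraph.dist_comm]
              exact (SimpleGraph.dist_le q).trans (le_of_eq hq)
            refine Or.inr (Set.mem_biUnion ⟨a, ha, hcq⟩ hadj.symm)

lemma edgeFin {S : Set W} (hS : S.Finite) :
    {f : H.edgeSet | ∀ z ∈ (f : Sym2 W), z ∈ S}.Finite := by
  have h1 : {e : Sym2 W | ∀ z ∈ e, z ∈ S}.Finite := by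
    refine ((hS.prod hS).image (fun p => s(p.1, p.2))).subset ?_
    intro e he
    obtain ⟨⟨u, v⟩, rfl⟩ := e.exists_rep
    have hu : u ∈ S := he u (Sym2.mem_mk_left u v)
    have hv : v ∈ S := he v (Sym2.mem_mk_right u v)
    exact ⟨(u, v), Set.mk_mem_prod hu hv, rfl⟩
  have : {f : H.edgeSet | ∀ z ∈ (f : Sym2 W), z ∈ S} =
      Subtype.val ⁻¹' {e : Sym2 W | ∀ z ∈ e, z ∈ S} := rfl
  rw [this]
  exact h1.preimage (Subtype.val_injective.injOn)

/-- The finite set of edges of `H` whose endpoints are within distance `n` of `A`. -/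
noncomputable def edgesNear (H : SimpleGraph W) (hH : H.Connected) (hHlf : LocallyFinite' H)
    (hA : A.Finite) (n : ℕ) : Finset H.edgeSet :=
  (edgeFin (ballA_finite hH hHlf hA n)).toFinset

lemma mem_edgesNear {hH : H.Connected} {hHlf : LocallyFinite' H} {hA : A.Finite} {n : ℕ}
    {f : H.edgeSet} :
    f ∈ edgesNear H hH hHlf hA n ↔ ∀ z ∈ (f : Sym2 W), ∃ a ∈ A, H.dist a z ≤ n := by
  simp [edgesNear, Set.Finite.mem_toFinset, Set.mem_setOf_eq]

lemma conn_eq_iUnion (hH : H.Connected) (hHlf : LocallyFinite' H) (hA : A.Finite) :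
    connectedEvent H A B =
      ⋃ n : ℕ, {ω : H.edgeSet → Bool |
        GoodPat A B (edgesNear H hH hHlf hA n) (fun f => ω f.1)} := by
  ext ω
  simp only [Set.mem_iUnion, Set.mem_setOf_eq]
  constructor
  · rintro ⟨a, ha, b, hb, hr⟩
    obtain ⟨w⟩ := hr
    refine ⟨w.length, a, ha, b, hb, ?_⟩
    have hsup : ∀ z ∈ w.support, ∃ a' ∈ A, H.dist a' z ≤ w.length := by
      intro z hz
      refine ⟨a, ha, ?_⟩
      have hle : openGraph H ω ≤ H := by
        intro x y hadj
        exact hadj.choose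
      have hlen : ((w.takeUntil z hz).mapLe hle).length ≤ w.length := by
        have h1 : ((w.takeUntil z hz).mapLe hle).length = (w.takeUntil z hz).length := by
          simp [SimpleGraph.Walk.mapLe]
        rw [h1]
        exact SimpleGraph.Walk.length_takeUntil_le w hz
      exact (SimpleGraph.dist_le _).trans hlen
    -- now transfer the walk into the `fromEdgeSet` graph
    have haux : ∀ (u v : W) (q : (openGraph H ω).Walk u v),
        (∀ z ∈ q.support, ∃ a' ∈ A, H.dist a' z ≤ w.length) →
        (SimpleGraph.fromEdgeSet
          (ESet (edgesNear H hH hHlf hA w.length) (fun f => ω f.1))).Reachable u v := by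
      intro u v q
      induction q with
      | nil => exact fun _ => SimpleGraph.Reachable.refl _
      | @cons x y z hadj q ih =>
          intro hsup
          obtain ⟨hH', hop⟩ := hadj
          have hxy : (⟨s(x, y), hH'⟩ : H.edgeSet) ∈ edgesNear H hH hHlf hA w.length := by
            rw [mem_edgesNear]
            intro t ht
            rcases Sym2.mem_iff.mp ht with rfl | rfl
            · exact hsup t (SimpleGraph.Walk.start_mem_support _)
            · exact hsup t (by
                show _ ∈ _ :: q.support; simp only [List.mem_cons]
                exact Or.inr (SimpleGraph.Walk.start_mem_support q))
          have hadj' : (SimpleGraph.fromEdgeSet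
              (ESet (edgesNear H hH hHlf hA w.length) (fun f => ω f.1))).Adj x y := by
            rw [SimpleGraph.fromEdgeSet_adj]
            exact ⟨⟨⟨⟨s(x, y), hH'⟩, hxy⟩, rfl, hop⟩, hH'.ne⟩
          refine hadj'.reachable.trans (ih ?_)
          intro t ht
          exact hsup t (by
            show _ ∈ _ :: q.support; simp only [List.mem_cons]; exact Or.inr ht)
    exact haux a b w hsup
  · rintro ⟨n, a, ha, b, hb, hr⟩
    refine ⟨a, ha, b, hb, ?_⟩
    refine hr.mono ?_
    intro x y hxy
    rw [SimpleGraph.fromEdgeSet_adj] at hxy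
    obtain ⟨⟨f, hf, hηf⟩, hne⟩ := hxy
    have hH' : H.Adj x y := by
      have : s(x, y) ∈ H.edgeSet := by rw [← hf]; exact f.1.2
      exact this
    refine ⟨hH', ?_⟩
    have : (⟨s(x, y), (SimpleGraph.mem_edgeSet H).mpr hH'⟩ : H.edgeSet) = f.1 :=
      Subtype.ext hf.symm
    rw [this]
    exact hηf

lemma goodPat_mono (hH : H.Connected) (hHlf : LocallyFinite' H) (hA : A.Finite)
    {n m : ℕ} (hnm : n ≤ m) (ω : H.edgeSet → Bool)
    (h : GoodPat A B (edgesNear H hH hHlf hA n) (fun f => ω f.1)) :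
    GoodPat A B (edgesNear H hH hHlf hA m) (fun f => ω f.1) := by
  obtain ⟨a, ha, b, hb, hr⟩ := h
  refine ⟨a, ha, b, hb, hr.mono (SimpleGraph.fromEdgeSet_mono ?_)⟩
  rintro e ⟨f, hf, hηf⟩
  have hfm : f.1 ∈ edgesNear H hH hHlf hA m := by
    rw [mem_edgesNear]
    intro z hz
    obtain ⟨a', ha', hd⟩ := mem_edgesNear.mp f.2 z hz
    exact ⟨a', ha', hd.trans hnm⟩
  exact ⟨⟨f.1, hfm⟩, hf, hηf⟩

end Exhaustion

end AuxWeakCover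
/-- **Lemma (monotonicity of connection probabilities under weak covering maps).**
If `π` is a weak covering map, then for every `p ∈ [0,1]` and all finite
`A, B ⊆ V(H)`, one has `P_p[π⁻¹(A) ↔ π⁻¹(B)] ≥ P_p[A ↔ B]`. -/
theorem connection_prob_mono_of_weakCover {V W : Type*}
    (G : SimpleGraph V) (H : SimpleGraph W)
    (hGconn : G.Connected) (hHconn : H.Connected)
    (hGlf : LocallyFinite' G) (hHlf : LocallyFinite' H)
    (π : V → W) (hπ : IsWeakCover G H π) :
    ∀ p : ℝ, 0 ≤ p → p ≤ 1 → ∀ A B : Set W, A.Finite → B.Finite →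
      ∀ (μG : Measure (G.edgeSet → Bool)) (μH : Measure (H.edgeSet → Bool)),
        IsBernoulliProduct p μG → IsBernoulliProduct p μH →
        μH (connectedEvent H A B) ≤
          μG (connectedEvent G (π ⁻¹' A) (π ⁻¹' B)) := by
  intro p hp0 hp1 A B hA hB μG μH hBG hBH
  have hV : Nonempty V := hGconn.nonempty
  have hsurj : Function.Surjective π := hπ.surjective hV hHconn
  have hσ : ∀ w, π ((fun w => (hsurj w).choose) w) = w := fun w => (hsurj w).choose_spec
  rw [conn_eq_iUnion hHconn hHlf hA (B := B)]
  have hmono : Monotone (fun n => {ω : H.edgeSet → Bool |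
      GoodPat A B (edgesNear H hHconn hHlf hA n) (fun f => ω f.1)}) :=
    fun n m hnm ω hω => goodPat_mono hHconn hHlf hA hnm ω hω
  rw [hmono.measure_iUnion]
  exact iSup_le fun n =>
    key_ineq hπ _ hσ A B (edgesNear H hHconn hHlf hA n) μG μH hBG hBH

end Percolation
end
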